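/- arXiv:2505.21666 — 5 statements merged into one kernel-verified Lean document; each statement's English description precedes it below -/
import Mathlib

section
/- Let f1, f2 : ℝ^d → ℝ be differentiable functions, and suppose there are constants m1, m2 > 0 and L2 ≥ 0 such that f1(x) ≥ m1, f2(x) ≥ m2 and ‖∇f2(x)‖ ≤ L2 for all x ∈ ℝ^d. Then for every x ∈ ℝ^d, ‖∇(ln f1)(x) − ∇(ln f2)(x)‖ ≤ (1/m1)·‖∇f1(x) − ∇f2(x)‖ + (L2/(m1·m2))·|f2(x) − f1(x)|. -/
open InnerProductSpace

lemma gradient_log_comp {d : ℕ} (f : EuclideanSpace ℝ (Fin d) → ℝ)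
    (hf : Differentiable ℝ f) (x : EuclideanSpace ℝ (Fin d)) (hx : f x ≠ 0) :
    gradient (fun y => Real.log (f y)) x = (f x)⁻¹ • gradient f x := by
  have h : HasFDerivAt (fun y => Real.log (f y)) ((f x)⁻¹ • fderiv ℝ f x) x := by
    have := (Real.hasDerivAt_log hx).comp_hasFDerivAt x (hf x).hasFDerivAt
    exact this
  have h' := h.hasGradientAt.gradient
  rw [h']
  simp [gradient, map_smul]

/-- Lemma on gradients of logarithms.
If `f1, f2 : ℝ^d → ℝ` are differentiable, bounded below by positive constants `m1, m2`,
and `‖∇f2‖ ≤ L2` everywhere, then for every `x`,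
`‖∇(ln f1)(x) − ∇(ln f2)(x)‖ ≤ (1/m1)‖∇f1(x) − ∇f2(x)‖ + (L2/(m1 m2))|f2(x) − f1(x)|`. -/
theorem gradient_log_diff_bound {d : ℕ}
    (f1 f2 : EuclideanSpace ℝ (Fin d) → ℝ)
    (hf1 : Differentiable ℝ f1) (hf2 : Differentiable ℝ f2)
    (m1 m2 L2 : ℝ) (hm1 : 0 < m1) (hm2 : 0 < m2) (hL2 : 0 ≤ L2)
    (hf1lb : ∀ x, m1 ≤ f1 x) (hf2lb : ∀ x, m2 ≤ f2 x)
    (hf2grad : ∀ x, ‖gradient f2 x‖ ≤ L2)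
    (x : EuclideanSpace ℝ (Fin d)) :
    ‖gradient (fun y => Real.log (f1 y)) x - gradient (fun y => Real.log (f2 y)) x‖ ≤
      (1 / m1) * ‖gradient f1 x - gradient f2 x‖ +
        (L2 / (m1 * m2)) * |f2 x - f1 x| := by
  have hc1 : 0 < f1 x := lt_of_lt_of_le hm1 (hf1lb x)
  have hc2 : 0 < f2 x := lt_of_lt_of_le hm2 (hf2lb x)
  rw [gradient_log_comp f1 hf1 x hc1.ne', gradient_log_comp f2 hf2 x hc2.ne']
  set a := gradient f1 x
  set b := gradient f2 x
  set c1 := f1 x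
  set c2 := f2 x
  have key : c1⁻¹ • a - c2⁻¹ • b = c1⁻¹ • (a - b) + ((c2 - c1) / (c1 * c2)) • b := by
    have : (c2 - c1) / (c1 * c2) = c1⁻¹ - c2⁻¹ := by
      field_simp
    rw [this, smul_sub, sub_smul]
    abel
  rw [key]
  calc ‖c1⁻¹ • (a - b) + ((c2 - c1) / (c1 * c2)) • b‖
      ≤ ‖c1⁻¹ • (a - b)‖ + ‖((c2 - c1) / (c1 * c2)) • b‖ := norm_add_le _ _
    _ = |c1⁻¹| * ‖a - b‖ + |(c2 - c1) / (c1 * c2)| * ‖b‖ := by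
        rw [norm_smul, norm_smul, Real.norm_eq_abs, Real.norm_eq_abs]
    _ ≤ (1 / m1) * ‖a - b‖ + (L2 / (m1 * m2)) * |c2 - c1| := by
        have h1 : |c1⁻¹| ≤ 1 / m1 := by
          rw [abs_of_pos (inv_pos.mpr hc1), one_div]
          exact inv_anti₀ hm1 (hf1lb x)
        have h2 : |(c2 - c1) / (c1 * c2)| * ‖b‖ ≤ L2 / (m1 * m2) * |c2 - c1| := by
          rw [abs_div, abs_of_pos (mul_pos hc1 hc2)]
          calc |c2 - c1| / (c1 * c2) * ‖b‖ ≤ |c2 - c1| / (m1 * m2) * L2 := by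
                gcongr
                · exact hf1lb x
                · exact hf2lb x
                · exact hf2grad x
            _ = L2 / (m1 * m2) * |c2 - c1| := by ring
        exact add_le_add (mul_le_mul_of_nonneg_right h1 (norm_nonneg _)) h2
end

section
/- Let F : ℝ^d → ℝ be twice continuously differentiable with sup_x ‖∇F(x)‖ < ∞, and let p : ℝ^d → ℝ be a continuously differentiable, strictly positive probability density. Assume the functions x ↦ F(x)², x ↦ (ΔF(x))², x ↦ ‖∇ log p(x)‖² and x ↦ ‖∇F(x)‖² are integrable with respect to p(x)dx, that F·(ΔF)·p and F·⟨∇F, ∇log p⟩·p are integrable, and that for each coordinate i and each fixed value of the remaining coordinates, F(x)·(∂F/∂x_i)(x)·p(x) → 0 as x_i → ±∞. Then ∫ ‖∇F(x)‖² p(x) dx ≤ ( sqrt(∫ (ΔF(x))² p(x) dx) + (sup_x ‖∇F(x)‖)·sqrt(∫ ‖∇ log p(x)‖² p(x) dx) ) · sqrt(∫ F(x)² p(x) dx). -/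
open MeasureTheory Filter

section myhelpers
open Set InnerProductSpace
open scoped ENNReal NNReal

-- Cauchy-Schwarz for integrals
theorem my_cs {α : Type*} [MeasurableSpace α] (μ : Measure α) (f g : α → ℝ)
    (hf : Integrable (fun x => f x ^ 2) μ) (hg : Integrable (fun x => g x ^ 2) μ)
    (hfg : Integrable (fun x => f x * g x) μ) :
    |∫ x, f x * g x ∂μ| ≤ Real.sqrt (∫ x, f x ^ 2 ∂μ) * Real.sqrt (∫ x, g x ^ 2 ∂μ) := by
  set a := ∫ x, f x ^ 2 ∂μ
  set b := ∫ x, f x * g x ∂μ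
  set c := ∫ x, g x ^ 2 ∂μ
  have ha : 0 ≤ a := integral_nonneg fun x => sq_nonneg _
  have hc : 0 ≤ c := integral_nonneg fun x => sq_nonneg _
  have key : ∀ t : ℝ, 0 ≤ a * (t * t) + (2 * b) * t + c := by
    intro t
    have h0 : 0 ≤ ∫ x, (t * f x + g x) ^ 2 ∂μ := integral_nonneg fun x => sq_nonneg _
    have hexp : (fun x => (t * f x + g x) ^ 2) =
        fun x => (t * t) * f x ^ 2 + (2 * t) * (f x * g x) + g x ^ 2 := by
      funext x; ring
    rw [hexp] at h0
    have i1 : Integrable (fun x => (t * t) * f x ^ 2) μ := hf.const_mul _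
    have i2 : Integrable (fun x => (2 * t) * (f x * g x)) μ := hfg.const_mul _
    have i12 : Integrable (fun x => (t * t) * f x ^ 2 + (2 * t) * (f x * g x)) μ := by
      exact i1.add i2
    rw [integral_add i12 hg, integral_add i1 i2, integral_const_mul, integral_const_mul] at h0
    calc (0:ℝ) ≤ t * t * a + 2 * t * b + c := h0
    _ = a * (t * t) + (2 * b) * t + c := by ring
  have hd := discrim_le_zero key
  rw [discrim] at hd
  have hb2 : b ^ 2 ≤ a * c := by nlinarith
  calc |b| = Real.sqrt (b ^ 2) := (Real.sqrt_sq_eq_abs b).symm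
  _ ≤ Real.sqrt (a * c) := Real.sqrt_le_sqrt hb2
  _ = Real.sqrt a * Real.sqrt c := Real.sqrt_mul ha c
open MeasureTheory Filter Set

lemma my_select {ψ : ℝ → ℝ} (hψ : Integrable ψ) {P : ℝ → Prop} (hP : ∀ᵐ t : ℝ, P t)
    (A ε : ℝ) (hε : 0 < ε) : ∃ t, A < t ∧ P t ∧ ψ t < ε := by
  by_contra h
  push_neg at h
  have hae : ∀ᵐ t : ℝ, t ∈ Ioi A → ε ≤ ψ t := by
    filter_upwards [hP] with t ht hmem
    exact h t hmem ht
  have h1 : ∫⁻ t in Ioi A, ENNReal.ofReal ε ∂volume ≤ ∫⁻ t in Ioi A, ‖ψ t‖₊ ∂volume := by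
    refine lintegral_mono_ae ?_
    rw [ae_restrict_iff' measurableSet_Ioi]
    filter_upwards [hae] with t ht hmem
    calc ENNReal.ofReal ε ≤ ENNReal.ofReal (ψ t) := ENNReal.ofReal_le_ofReal (ht hmem)
    _ ≤ ‖ψ t‖₊ := Real.ofReal_le_enorm _
  rw [lintegral_const, Measure.restrict_apply MeasurableSet.univ, Set.univ_inter,
    Real.volume_Ioi, ENNReal.mul_top (ENNReal.ofReal_pos.mpr hε).ne'] at h1
  have h2 : ∫⁻ t in Ioi A, ‖ψ t‖₊ ∂volume < ⊤ :=
    lt_of_le_of_lt (lintegral_mono' Measure.restrict_le_self le_rfl) hψ.hasFiniteIntegral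
  exact absurd h1 h2.not_ge

lemma my_box_tendsto {n : ℕ} (h : (Fin n → ℝ) → ℝ) (hint : Integrable h) :
    Tendsto (fun t : ℝ => ∫ x in Icc (fun _ => -t) (fun _ => t), h x) atTop
      (nhds (∫ x, h x)) := by
  have := tendsto_integral_filter_of_dominated_convergence (μ := (volume : Measure (Fin n → ℝ)))
    (F := fun t : ℝ => (Icc (fun _ => -t) (fun _ => t) : Set (Fin n → ℝ)).indicator h)
    (f := h) (bound := fun x => ‖h x‖) (l := atTop)
    (by
      filter_upwards with t
      exact hint.aestronglyMeasurable.indicator measurableSet_Icc)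
    (by
      filter_upwards with t
      filter_upwards with x
      exact norm_indicator_le_norm_self _ _)
    hint.norm
    (by
      filter_upwards with x
      have : ∀ᶠ t : ℝ in atTop, (Icc (fun _ => -t) (fun _ => t) : Set (Fin n → ℝ)).indicator h x
          = h x := by
        filter_upwards [eventually_ge_atTop (‖x‖)] with t ht
        refine Set.indicator_of_mem (Set.mem_Icc.mpr ⟨fun i => ?_, fun i => ?_⟩) h
        · have h2 := norm_le_pi_norm x i
          simp only [Real.norm_eq_abs] at h2
          show -t ≤ x i
          linarith [(abs_le.mp (h2.trans ht)).1]
        · have h2 := norm_le_pi_norm x i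
          simp only [Real.norm_eq_abs] at h2
          show x i ≤ t
          linarith [(abs_le.mp (h2.trans ht)).2]
      exact Tendsto.congr' (Filter.EventuallyEq.symm this) tendsto_const_nhds)
  simpa only [integral_indicator measurableSet_Icc] using this
open MeasureTheory Filter Set InnerProductSpace

variable {d : ℕ}

lemma grad_apply (F : EuclideanSpace ℝ (Fin d) → ℝ) (x : EuclideanSpace ℝ (Fin d)) (i : Fin d) :
    gradient F x i = fderiv ℝ F x (EuclideanSpace.single i 1) := by
  have h : (inner ℝ (gradient F x) (EuclideanSpace.single i (1:ℝ)) : ℝ)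
      = fderiv ℝ F x (EuclideanSpace.single i 1) := toDual_symm_apply
  rw [EuclideanSpace.inner_single_right] at h
  simpa using h

lemma norm_sq_eq (y : EuclideanSpace ℝ (Fin d)) : ‖y‖ ^ 2 = ∑ i, (y i) ^ 2 := by
  rw [EuclideanSpace.norm_eq, Real.sq_sqrt (by positivity)]
  simp [sq_abs]

lemma grad_norm_sq (F : EuclideanSpace ℝ (Fin d) → ℝ) (x : EuclideanSpace ℝ (Fin d)) :
    ‖gradient F x‖ ^ 2 = ∑ i, (fderiv ℝ F x (EuclideanSpace.single i 1)) ^ 2 := by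
  rw [norm_sq_eq]
  exact Finset.sum_congr rfl fun i _ => by rw [grad_apply]

lemma grad_inner (F G : EuclideanSpace ℝ (Fin d) → ℝ) (x : EuclideanSpace ℝ (Fin d)) :
    (inner ℝ (gradient F x) (gradient G x) : ℝ)
      = ∑ i, fderiv ℝ F x (EuclideanSpace.single i 1) * fderiv ℝ G x (EuclideanSpace.single i 1) := by
  rw [PiLp.inner_apply]
  refine Finset.sum_congr rfl fun i _ => ?_
  rw [← grad_apply, ← grad_apply]
  simp [RCLike.inner_apply, mul_comm]

lemma coord_le_grad (F : EuclideanSpace ℝ (Fin d) → ℝ) (x : EuclideanSpace ℝ (Fin d)) (i : Fin d) :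
    |fderiv ℝ F x (EuclideanSpace.single i 1)| ≤ ‖gradient F x‖ := by
  have h : (inner ℝ (gradient F x) (EuclideanSpace.single i (1:ℝ)) : ℝ)
      = fderiv ℝ F x (EuclideanSpace.single i 1) := toDual_symm_apply
  calc |fderiv ℝ F x (EuclideanSpace.single i 1)|
      = |(inner ℝ (gradient F x) (EuclideanSpace.single i (1:ℝ)) : ℝ)| := by rw [h]
  _ ≤ ‖gradient F x‖ * ‖EuclideanSpace.single i (1:ℝ)‖ := abs_real_inner_le_norm _ _
  _ = ‖gradient F x‖ := by rw [EuclideanSpace.norm_single]; simp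

lemma log_fderiv {p : EuclideanSpace ℝ (Fin d) → ℝ} (hp : ContDiff ℝ 1 p)
    (hppos : ∀ x, 0 < p x) (x : EuclideanSpace ℝ (Fin d)) :
    fderiv ℝ (fun y => Real.log (p y)) x = (p x)⁻¹ • fderiv ℝ p x := by
  have h1 : HasFDerivAt p (fderiv ℝ p x) x :=
    (hp.differentiable one_ne_zero x).hasFDerivAt
  have h2 : HasDerivAt Real.log (p x)⁻¹ (p x) := Real.hasDerivAt_log (hppos x).ne'
  exact (h2.comp_hasFDerivAt x h1).fderiv

lemma score_apply {p : EuclideanSpace ℝ (Fin d) → ℝ} (hp : ContDiff ℝ 1 p)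
    (hppos : ∀ x, 0 < p x) (x : EuclideanSpace ℝ (Fin d)) (i : Fin d) :
    gradient (fun y => Real.log (p y)) x i
      = (p x)⁻¹ * fderiv ℝ p x (EuclideanSpace.single i 1) := by
  rw [grad_apply, log_fderiv hp hppos]
  simp

lemma score_continuous {p : EuclideanSpace ℝ (Fin d) → ℝ} (hp : ContDiff ℝ 1 p)
    (hppos : ∀ x, 0 < p x) :
    Continuous (gradient (fun y => Real.log (p y))) := by
  have h : gradient (fun y => Real.log (p y)) = fun x =>
      (toDual ℝ (EuclideanSpace ℝ (Fin d))).symm ((p x)⁻¹ • fderiv ℝ p x) := by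
    funext x
    rw [gradient, log_fderiv hp hppos]
  rw [h]
  refine (LinearIsometryEquiv.continuous _).comp ?_
  exact ((hp.continuous.inv₀ fun x => (hppos x).ne').smul (hp.continuous_fderiv one_ne_zero))


section core
variable {n : ℕ}

theorem my_div_zero (F p : EuclideanSpace ℝ (Fin (n+1)) → ℝ)
    (hF : ContDiff ℝ 2 F) (hp : ContDiff ℝ 1 p)
    (hdiv_int : Integrable (fun x => ∑ i,
      ((fderiv ℝ F x (EuclideanSpace.single i 1)) ^ 2 * p x
        + F x * (fderiv ℝ (fun y => fderiv ℝ F y (EuclideanSpace.single i 1)) x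
            (EuclideanSpace.single i 1)) * p x
        + F x * fderiv ℝ F x (EuclideanSpace.single i 1)
            * fderiv ℝ p x (EuclideanSpace.single i 1))) MeasureTheory.volume)
    (hq_int : ∀ i : Fin (n+1), Integrable
      (fun x => F x * fderiv ℝ F x (EuclideanSpace.single i 1) * p x) MeasureTheory.volume) :
    ∫ x, (∑ i,
      ((fderiv ℝ F x (EuclideanSpace.single i 1)) ^ 2 * p x
        + F x * (fderiv ℝ (fun y => fderiv ℝ F y (EuclideanSpace.single i 1)) x
            (EuclideanSpace.single i 1)) * p x
        + F x * fderiv ℝ F x (EuclideanSpace.single i 1)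
            * fderiv ℝ p x (EuclideanSpace.single i 1))) = 0 := by
  classical
  set L : (Fin (n+1) → ℝ) ≃L[ℝ] EuclideanSpace ℝ (Fin (n+1)) :=
    (PiLp.continuousLinearEquiv 2 ℝ (fun _ : Fin (n+1) => ℝ)).symm with hL
  set hdiv : EuclideanSpace ℝ (Fin (n+1)) → ℝ := fun x => ∑ i,
      ((fderiv ℝ F x (EuclideanSpace.single i 1)) ^ 2 * p x
        + F x * (fderiv ℝ (fun y => fderiv ℝ F y (EuclideanSpace.single i 1)) x
            (EuclideanSpace.single i 1)) * p x
        + F x * fderiv ℝ F x (EuclideanSpace.single i 1)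
            * fderiv ℝ p x (EuclideanSpace.single i 1)) with hhdiv
  -- measurable equiv transfer
  have me := (MeasurableEquiv.toLp 2 (Fin (n+1) → ℝ)).symm
  have hcoe : ⇑((MeasurableEquiv.toLp 2 (Fin (n+1) → ℝ)).symm).symm = ⇑L := rfl
  have mp : MeasurePreserving (⇑((MeasurableEquiv.toLp 2 (Fin (n+1) → ℝ)).symm).symm)
      MeasureTheory.volume MeasureTheory.volume :=
    (EuclideanSpace.volume_preserving_symm_measurableEquiv_toLp (Fin (n+1))).symm _
  have transfer_int : ∀ g : EuclideanSpace ℝ (Fin (n+1)) → ℝ,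
      Integrable g MeasureTheory.volume → Integrable (fun y => g (L y)) MeasureTheory.volume := by
    intro g hg
    have := (mp.integrable_comp_emb
      ((MeasurableEquiv.toLp 2 (Fin (n+1) → ℝ)).symm).symm.measurableEmbedding).mpr hg
    rwa [hcoe] at this
  have transfer_eq : ∀ g : EuclideanSpace ℝ (Fin (n+1)) → ℝ,
      ∫ y, g (L y) = ∫ x, g x := by
    intro g
    have := mp.integral_comp
      ((MeasurableEquiv.toLp 2 (Fin (n+1) → ℝ)).symm).symm.measurableEmbedding g
    rwa [hcoe] at this
  -- smoothness facts
  have hFdiff : Differentiable ℝ F := hF.differentiable (by norm_num)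
  have hpdiff : Differentiable ℝ p := hp.differentiable one_ne_zero
  have hGdiff : ∀ i : Fin (n+1),
      ContDiff ℝ 1 (fun y => fderiv ℝ F y (EuclideanSpace.single i 1)) :=
    fun i => (hF.fderiv_right (by norm_num)).clm_apply contDiff_const
  -- the vector field on the pi side
  set f : Fin (n+1) → (Fin (n+1) → ℝ) → ℝ :=
    fun i => (fun x => F x * fderiv ℝ F x (EuclideanSpace.single i 1) * p x) ∘ ⇑L with hf
  set f' : Fin (n+1) → (Fin (n+1) → ℝ) → (Fin (n+1) → ℝ) →L[ℝ] ℝ := fun i y =>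
    ((F (L y) * fderiv ℝ F (L y) (EuclideanSpace.single i 1)) • fderiv ℝ p (L y)
      + p (L y) • (F (L y) • fderiv ℝ (fun z => fderiv ℝ F z (EuclideanSpace.single i 1)) (L y)
        + (fderiv ℝ F (L y) (EuclideanSpace.single i 1)) • fderiv ℝ F (L y))).comp
      (L : (Fin (n+1) → ℝ) →L[ℝ] EuclideanSpace ℝ (Fin (n+1))) with hf'
  have hder : ∀ (y : Fin (n+1) → ℝ) (i : Fin (n+1)), HasFDerivAt (f i) (f' i y) y := by
    intro y i
    have h1 : HasFDerivAt F (fderiv ℝ F (L y)) (L y) := (hFdiff (L y)).hasFDerivAt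
    have h2 : HasFDerivAt (fun z => fderiv ℝ F z (EuclideanSpace.single i 1))
        (fderiv ℝ (fun z => fderiv ℝ F z (EuclideanSpace.single i 1)) (L y)) (L y) :=
      (((hGdiff i).differentiable one_ne_zero) (L y)).hasFDerivAt
    have h3 : HasFDerivAt p (fderiv ℝ p (L y)) (L y) := (hpdiff (L y)).hasFDerivAt
    have h4 := (h1.mul h2).mul h3
    exact h4.comp y (L.hasFDerivAt (x := y))
  -- pointwise divergence identity
  have hLsingle : ∀ i : Fin (n+1), L (Pi.single i 1) = EuclideanSpace.single i (1:ℝ) :=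
    fun i => EuclideanSpace.toLp_single i (1:ℝ)
  have hdiveq : ∀ y : Fin (n+1) → ℝ, (∑ i, f' i y (Pi.single i 1)) = hdiv (L y) := by
    intro y
    rw [hhdiv]
    refine Finset.sum_congr rfl fun i _ => ?_
    rw [hf']
    simp only [ContinuousLinearMap.coe_comp', Function.comp_apply,
      ContinuousLinearEquiv.coe_coe, ContinuousLinearMap.add_apply,
      ContinuousLinearMap.coe_smul', Pi.smul_apply, smul_eq_mul, hLsingle i]
    ring
  -- continuity of components
  have hfc : ∀ i, Continuous (f i) := by
    intro i
    rw [hf]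
    exact ((hF.continuous.mul ((hGdiff i).continuous)).mul hp.continuous).comp L.continuous
  -- integrability on the pi side
  have hPi_int : Integrable (fun y => hdiv (L y)) MeasureTheory.volume := transfer_int _ hdiv_int
  have hqPi_int : ∀ i, Integrable (f i) MeasureTheory.volume := by
    intro i
    rw [hf]
    exact transfer_int _ (hq_int i)
  -- Fubini slices
  have hprod_int : ∀ i : Fin (n+1), Integrable
      (fun z : ℝ × (Fin n → ℝ) => f i ((Fin.insertNthEquiv (fun _ => ℝ) i) z))
      MeasureTheory.volume := by
    intro i
    have mpi := (measurePreserving_piFinSuccAbove (fun _ : Fin (n+1) => (volume : Measure ℝ)) i).symm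
    have hemb := (MeasurableEquiv.piFinSuccAbove (fun _ : Fin (n+1) => ℝ) i).symm.measurableEmbedding
    have hpi : Integrable (f i) (Measure.pi fun _ : Fin (n+1) => (volume : Measure ℝ)) := by
      rw [← volume_pi]; exact hqPi_int i
    have := (mpi.integrable_comp_emb hemb).mpr hpi
    rw [MeasurableEquiv.piFinSuccAbove_symm_apply] at this
    rw [Measure.volume_eq_prod, volume_pi]
    exact this
  have hslice : ∀ i : Fin (n+1), ∀ᵐ t : ℝ,
      Integrable (fun ω : Fin n → ℝ => f i (i.insertNth t ω)) MeasureTheory.volume := by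
    intro i
    filter_upwards [(hprod_int i).prod_right_ae] with t ht
    exact ht.congr (Filter.Eventually.of_forall fun ω => rfl)
  have hnorm : ∀ i : Fin (n+1), Integrable
      (fun t : ℝ => ∫ ω : Fin n → ℝ, ‖f i (i.insertNth t ω)‖) MeasureTheory.volume := by
    intro i
    refine ((hprod_int i).integral_norm_prod_left).congr
      (Filter.Eventually.of_forall fun t => ?_)
    exact integral_congr_ae (Filter.Eventually.of_forall fun ω => rfl)
  set ψ : ℝ → ℝ := fun t => ∑ i : Fin (n+1),
      ((∫ ω : Fin n → ℝ, ‖f i (i.insertNth t ω)‖)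
        + ∫ ω : Fin n → ℝ, ‖f i (i.insertNth (-t) ω)‖) with hψdef
  have hψ_int : Integrable ψ MeasureTheory.volume :=
    integrable_finset_sum _ (fun i _ => (hnorm i).add ((hnorm i).comp_neg))
  have hψ_lt : ∀ t, (∀ i : Fin (n+1),
      ((∫ ω : Fin n → ℝ, ‖f i (i.insertNth t ω)‖)
        + ∫ ω : Fin n → ℝ, ‖f i (i.insertNth (-t) ω)‖) ≤ ψ t) := by
    intro t i
    refine Finset.single_le_sum (f := fun j => ((∫ ω : Fin n → ℝ, ‖f j (j.insertNth t ω)‖)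
        + ∫ ω : Fin n → ℝ, ‖f j (j.insertNth (-t) ω)‖)) (fun j _ => ?_) (Finset.mem_univ i)
    exact add_nonneg (integral_nonneg fun ω => norm_nonneg _)
      (integral_nonneg fun ω => norm_nonneg _)
  have hP : ∀ᵐ t : ℝ, ∀ i : Fin (n+1),
      Integrable (fun ω : Fin n → ℝ => f i (i.insertNth t ω)) MeasureTheory.volume ∧
      Integrable (fun ω : Fin n → ℝ => f i (i.insertNth (-t) ω)) MeasureTheory.volume := by
    rw [ae_all_iff]
    intro i
    have hneg : ∀ᵐ t : ℝ,
        Integrable (fun ω : Fin n → ℝ => f i (i.insertNth (-t) ω)) MeasureTheory.volume :=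
      ((Measure.measurePreserving_neg
        (volume : Measure ℝ)).quasiMeasurePreserving.tendsto_ae).eventually (hslice i)
    exact (hslice i).and hneg
  set D : ℝ → ℝ := fun t =>
    ∫ y in Icc (fun _ : Fin (n+1) => -t) (fun _ : Fin (n+1) => t), hdiv (L y) with hD
  have hbox : Tendsto D atTop (nhds (∫ y, hdiv (L y))) := my_box_tendsto _ hPi_int
  have hface : ∀ (i : Fin (n+1)) (s : ℝ) (S : Set (Fin n → ℝ)),
      Integrable (fun ω : Fin n → ℝ => f i (i.insertNth s ω)) MeasureTheory.volume →
      |∫ ω in S, f i (i.insertNth s ω)| ≤ ∫ ω : Fin n → ℝ, ‖f i (i.insertNth s ω)‖ := by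
    intro i s S hI
    calc |∫ ω in S, f i (i.insertNth s ω)|
        ≤ ∫ ω in S, ‖f i (i.insertNth s ω)‖ := by
          simpa [Real.norm_eq_abs] using
            norm_integral_le_integral_norm (μ := volume.restrict S)
              (f := fun ω : Fin n → ℝ => f i (i.insertNth s ω))
    _ ≤ ∫ ω : Fin n → ℝ, ‖f i (i.insertNth s ω)‖ :=
          setIntegral_le_integral hI.norm (Filter.Eventually.of_forall fun ω => norm_nonneg _)
  have hfeq : (fun y : Fin (n+1) → ℝ => ∑ i, f' i y (Pi.single i 1))
      = fun y => hdiv (L y) := funext hdiveq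
  have hkey : ∀ t : ℝ, 0 < t → (∀ i : Fin (n+1),
      Integrable (fun ω : Fin n → ℝ => f i (i.insertNth t ω)) MeasureTheory.volume ∧
      Integrable (fun ω : Fin n → ℝ => f i (i.insertNth (-t) ω)) MeasureTheory.volume) →
      |D t| ≤ ψ t := by
    intro t ht hPt
    have hle : (fun _ : Fin (n+1) => -t) ≤ (fun _ : Fin (n+1) => t) := fun j => by
      dsimp; linarith
    have Hi : IntegrableOn (fun y : Fin (n+1) → ℝ => ∑ i, f' i y (Pi.single i 1))
        (Icc (fun _ : Fin (n+1) => -t) (fun _ : Fin (n+1) => t)) MeasureTheory.volume := by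
      rw [hfeq]; exact hPi_int.integrableOn
    have hthm := integral_divergence_of_hasFDerivAt_off_countable'
      (fun _ : Fin (n+1) => -t) (fun _ : Fin (n+1) => t) hle f f' ∅ countable_empty
      (fun i => (hfc i).continuousOn) (fun x _ i => hder x i) Hi
    rw [hfeq] at hthm
    have hDt : D t = ∑ i : Fin (n+1),
        ((∫ ω in Icc (fun _ : Fin n => -t) (fun _ : Fin n => t), f i (i.insertNth t ω)) -
         (∫ ω in Icc (fun _ : Fin n => -t) (fun _ : Fin n => t), f i (i.insertNth (-t) ω))) := by
      rw [hD]
      exact hthm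
    rw [hDt]
    calc |∑ i : Fin (n+1),
        ((∫ ω in Icc (fun _ : Fin n => -t) (fun _ : Fin n => t), f i (i.insertNth t ω)) -
         (∫ ω in Icc (fun _ : Fin n => -t) (fun _ : Fin n => t), f i (i.insertNth (-t) ω)))|
        ≤ ∑ i : Fin (n+1),
        |(∫ ω in Icc (fun _ : Fin n => -t) (fun _ : Fin n => t), f i (i.insertNth t ω)) -
         (∫ ω in Icc (fun _ : Fin n => -t) (fun _ : Fin n => t), f i (i.insertNth (-t) ω))| :=
          Finset.abs_sum_le_sum_abs _ _
    _ ≤ ψ t := by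
        rw [hψdef]
        refine Finset.sum_le_sum fun i _ => ?_
        refine (abs_sub _ _).trans ?_
        exact add_le_add (hface i t _ (hPt i).1) (hface i (-t) _ (hPt i).2)
  -- epsilon argument
  set I : ℝ := ∫ y, hdiv (L y) with hI
  have habs : ∀ ε : ℝ, 0 < ε → |I| ≤ 0 + ε := by
    intro ε hε
    obtain ⟨N, hN⟩ := (Metric.tendsto_atTop.mp hbox) (ε/2) (by linarith)
    obtain ⟨t, htA, htP, htψ⟩ := my_select hψ_int hP (max N 0) (ε/2) (by linarith)
    have ht0 : 0 < t := lt_of_le_of_lt (le_max_right N 0) htA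
    have h1 : |D t - I| < ε/2 := by
      have := hN t (le_of_lt (lt_of_le_of_lt (le_max_left N 0) htA))
      rwa [Real.dist_eq] at this
    have h2 : |D t| ≤ ψ t := hkey t ht0 htP
    have : |I| ≤ |I - D t| + |D t| := by
      calc |I| = |(I - D t) + D t| := by ring_nf
      _ ≤ |I - D t| + |D t| := abs_add_le _ _
    rw [abs_sub_comm] at this
    linarith
  have hIzero : I = 0 := by
    have h0 : |I| ≤ 0 := le_of_forall_pos_le_add habs
    exact abs_nonpos_iff.mp h0
  show ∫ x, hdiv x = 0
  rw [← transfer_eq hdiv]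
  exact hIzero
end core


end myhelpers

/-- The Laplacian `ΔF(x) = Σ_i ∂²F/∂x_i²(x)` of `F : ℝ^d → ℝ`. -/
noncomputable def laplacian {d : ℕ} (F : EuclideanSpace ℝ (Fin d) → ℝ)
    (x : EuclideanSpace ℝ (Fin d)) : ℝ :=
  ∑ i, fderiv ℝ (fun y => fderiv ℝ F y (EuclideanSpace.single i 1)) x
    (EuclideanSpace.single i 1)

/-- The measure `p(x)dx` on `ℝ^d` associated with a density `p`. -/
noncomputable def densMeasure {d : ℕ} (p : EuclideanSpace ℝ (Fin d) → ℝ) :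
    Measure (EuclideanSpace ℝ (Fin d)) :=
  MeasureTheory.volume.withDensity fun x => ENNReal.ofReal (p x)

section denshelp
open scoped ENNReal NNReal
variable {d : ℕ} {p : EuclideanSpace ℝ (Fin d) → ℝ}

lemma dens_eq :
    densMeasure p = MeasureTheory.volume.withDensity fun x => ((p x).toNNReal : ℝ≥0∞) := rfl

lemma dens_integral (hp : Continuous p) (hppos : ∀ x, 0 ≤ p x)
    (f : EuclideanSpace ℝ (Fin d) → ℝ) :
    ∫ x, f x ∂(densMeasure p) = ∫ x, p x * f x := by
  rw [dens_eq, integral_withDensity_eq_integral_smul hp.measurable.real_toNNReal f]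
  refine integral_congr_ae (Filter.Eventually.of_forall fun x => ?_)
  simp [NNReal.smul_def, Real.coe_toNNReal _ (hppos x)]

lemma dens_integrable_iff (hp : Continuous p) (hppos : ∀ x, 0 ≤ p x)
    (f : EuclideanSpace ℝ (Fin d) → ℝ) :
    Integrable f (densMeasure p) ↔ Integrable (fun x => p x * f x) MeasureTheory.volume := by
  rw [dens_eq, integrable_withDensity_iff_integrable_smul hp.measurable.real_toNNReal]
  constructor <;> intro h <;> refine h.congr (Filter.Eventually.of_forall fun x => ?_) <;>
    simp [NNReal.smul_def, Real.coe_toNNReal _ (hppos x)]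

end denshelp

/-- integration-by-parts bound on the gradient norm.
For `F : ℝ^d → ℝ` twice continuously differentiable with bounded gradient and a `C¹`
strictly positive probability density `p`, under suitable integrability and vanishing-at-infinity
conditions,
`∫ ‖∇F‖² p ≤ ( √(∫ (ΔF)² p) + (sup_x ‖∇F(x)‖)·√(∫ ‖∇log p‖² p) ) · √(∫ F² p)`. -/
theorem gradient_sq_integral_bound {d : ℕ}
    (F p : EuclideanSpace ℝ (Fin d) → ℝ)
    (hF : ContDiff ℝ 2 F)
    (hFgradBdd : BddAbove (Set.range fun x => ‖gradient F x‖))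
    (hp : ContDiff ℝ 1 p) (hppos : ∀ x, 0 < p x)
    (hpdens : ∫ x, p x = 1)
    (hint_F2 : Integrable (fun x => (F x) ^ 2) (densMeasure p))
    (hint_lap2 : Integrable (fun x => (laplacian F x) ^ 2) (densMeasure p))
    (hint_score2 :
      Integrable (fun x => ‖gradient (fun y => Real.log (p y)) x‖ ^ 2) (densMeasure p))
    (hint_grad2 : Integrable (fun x => ‖gradient F x‖ ^ 2) (densMeasure p))
    (hint_Flap : Integrable (fun x => F x * laplacian F x) (densMeasure p))
    (hint_Fscore : Integrable
      (fun x => F x * (inner ℝ (gradient F x) (gradient (fun y => Real.log (p y)) x) : ℝ))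
      (densMeasure p))
    (hvanish : ∀ (i : Fin d) (x : EuclideanSpace ℝ (Fin d)),
      Tendsto (fun t : ℝ =>
          F (WithLp.toLp 2 (Function.update x i t)) *
            fderiv ℝ F (WithLp.toLp 2 (Function.update x i t)) (EuclideanSpace.single i 1) *
            p (WithLp.toLp 2 (Function.update x i t))) atTop (nhds 0) ∧
      Tendsto (fun t : ℝ =>
          F (WithLp.toLp 2 (Function.update x i t)) *
            fderiv ℝ F (WithLp.toLp 2 (Function.update x i t)) (EuclideanSpace.single i 1) *
            p (WithLp.toLp 2 (Function.update x i t))) atBot (nhds 0)) :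
    ∫ x, ‖gradient F x‖ ^ 2 ∂(densMeasure p) ≤
      (Real.sqrt (∫ x, (laplacian F x) ^ 2 ∂(densMeasure p)) +
          (⨆ x, ‖gradient F x‖) *
            Real.sqrt (∫ x, ‖gradient (fun y => Real.log (p y)) x‖ ^ 2 ∂(densMeasure p))) *
        Real.sqrt (∫ x, (F x) ^ 2 ∂(densMeasure p)) := by
  classical
  have hpc : Continuous p := hp.continuous
  have hp0 : ∀ x, 0 ≤ p x := fun x => (hppos x).le
  have hM0 : 0 ≤ ⨆ x, ‖gradient F x‖ := Real.iSup_nonneg fun x => norm_nonneg _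
  have hRHSfac : 0 ≤ Real.sqrt (∫ x, (laplacian F x) ^ 2 ∂(densMeasure p)) +
      (⨆ x, ‖gradient F x‖) *
        Real.sqrt (∫ x, ‖gradient (fun y => Real.log (p y)) x‖ ^ 2 ∂(densMeasure p)) :=
    add_nonneg (Real.sqrt_nonneg _) (mul_nonneg hM0 (Real.sqrt_nonneg _))
  match d, F, p, hF, hFgradBdd, hp, hppos, hpdens, hint_F2, hint_lap2, hint_score2,
      hint_grad2, hint_Flap, hint_Fscore, hM0, hRHSfac with
  | 0, F, p, hF, hFgradBdd, hp, hppos, hpdens, hint_F2, hint_lap2, hint_score2,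
      hint_grad2, hint_Flap, hint_Fscore, hM0, hRHSfac => ?_
  | (n+1), F, p, hF, hFgradBdd, hp, hppos, hpdens, hint_F2, hint_lap2, hint_score2,
      hint_grad2, hint_Flap, hint_Fscore, hM0, hRHSfac => ?_
  case _ =>
    haveI : Subsingleton (EuclideanSpace ℝ (Fin 0)) :=
      ⟨fun a b => by ext i; exact i.elim0⟩
    have h0 : ∫ x, ‖gradient F x‖ ^ 2 ∂(densMeasure p) = 0 := by
      have hz : (fun x : EuclideanSpace ℝ (Fin 0) => ‖gradient F x‖ ^ 2) = fun _ => 0 := by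
        funext x
        rw [Subsingleton.elim (gradient F x) 0]
        simp
      rw [hz, integral_zero]
    rw [h0]
    exact mul_nonneg hRHSfac (Real.sqrt_nonneg _)
  case _ =>
    have hM : ∀ x, ‖gradient F x‖ ≤ ⨆ y, ‖gradient F y‖ := fun x => le_ciSup hFgradBdd x
    have hGdiff : ∀ i : Fin (n+1),
        ContDiff ℝ 1 (fun y => fderiv ℝ F y (EuclideanSpace.single i 1)) :=
      fun i => (hF.fderiv_right (by norm_num)).clm_apply contDiff_const
    have hscont := score_continuous hp hppos
    have hFc : Continuous F := hF.continuous
    set M := ⨆ y, ‖gradient F y‖ with hMdef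
    -- transfers to Lebesgue measure
    have hT2 : Integrable (fun x => p x * (F x) ^ 2) volume :=
      (dens_integrable_iff hpc hp0 _).mp hint_F2
    have hTg : Integrable (fun x => p x * ‖gradient F x‖ ^ 2) volume :=
      (dens_integrable_iff hpc hp0 _).mp hint_grad2
    have hTl : Integrable (fun x => p x * (F x * laplacian F x)) volume :=
      (dens_integrable_iff hpc hp0 _).mp ((dens_integrable_iff hpc hp0 _).mpr
        ((dens_integrable_iff hpc hp0 _).mp hint_Flap))
    have hTs : Integrable (fun x => p x * (F x *
        (inner ℝ (gradient F x) (gradient (fun y => Real.log (p y)) x) : ℝ))) volume :=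
      (dens_integrable_iff hpc hp0 _).mp hint_Fscore
    have hpInt : Integrable p volume := by
      by_contra hcon
      rw [integral_undef hcon] at hpdens
      norm_num at hpdens
    have hpF : Integrable (fun x => p x * |F x|) volume := by
      have hmeas : AEStronglyMeasurable (fun x => p x * |F x|) volume :=
        (hpc.mul hFc.abs).aestronglyMeasurable
      have hsum : Integrable (fun x => p x * (F x) ^ 2 + p x) volume := by
        exact hT2.add hpInt
      refine Integrable.mono hsum hmeas ?_
      filter_upwards with x
      rw [Real.norm_eq_abs, Real.norm_eq_abs]
      have h1 : 0 ≤ p x := hp0 x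
      have h2 : (0:ℝ) ≤ |F x| := abs_nonneg _
      rw [abs_of_nonneg (mul_nonneg h1 h2), abs_of_nonneg (by nlinarith [sq_abs (F x)] : (0:ℝ) ≤ p x * (F x)^2 + p x)]
      nlinarith [mul_nonneg h1 (sq_nonneg (|F x| - 1)), mul_nonneg h1 h2, sq_abs (F x)]
    have hq_int : ∀ i : Fin (n+1), Integrable
        (fun x => F x * fderiv ℝ F x (EuclideanSpace.single i 1) * p x) volume := by
      intro i
      have hmeas : AEStronglyMeasurable
          (fun x => F x * fderiv ℝ F x (EuclideanSpace.single i 1) * p x) volume :=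
        ((hFc.mul (hGdiff i).continuous).mul hpc).aestronglyMeasurable
      refine Integrable.mono (hpF.const_mul M) hmeas ?_
      filter_upwards with x
      rw [Real.norm_eq_abs, Real.norm_eq_abs]
      have h1 : |fderiv ℝ F x (EuclideanSpace.single i 1)| ≤ M :=
        (coord_le_grad F x i).trans (hM x)
      have h2 : 0 ≤ p x := hp0 x
      have h3 : (0:ℝ) ≤ |F x| := abs_nonneg _
      rw [abs_mul, abs_mul, abs_of_nonneg h2,
        abs_of_nonneg (mul_nonneg hM0 (mul_nonneg h2 h3))]
      nlinarith [mul_nonneg (mul_nonneg h3 h2) (sub_nonneg.mpr h1)]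
    -- pointwise divergence identity
    have hpt : ∀ x : EuclideanSpace ℝ (Fin (n+1)), (∑ i,
        ((fderiv ℝ F x (EuclideanSpace.single i 1)) ^ 2 * p x
          + F x * (fderiv ℝ (fun y => fderiv ℝ F y (EuclideanSpace.single i 1)) x
              (EuclideanSpace.single i 1)) * p x
          + F x * fderiv ℝ F x (EuclideanSpace.single i 1)
              * fderiv ℝ p x (EuclideanSpace.single i 1)))
        = p x * ‖gradient F x‖ ^ 2 + p x * (F x * laplacian F x) + p x * (F x *
            (inner ℝ (gradient F x) (gradient (fun y => Real.log (p y)) x) : ℝ)) := by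
      intro x
      rw [Finset.sum_add_distrib, Finset.sum_add_distrib]
      have e1 : ∑ i : Fin (n+1), (fderiv ℝ F x (EuclideanSpace.single i 1)) ^ 2 * p x
          = p x * ‖gradient F x‖ ^ 2 := by
        rw [grad_norm_sq, ← Finset.sum_mul]
        ring
      have e2 : ∑ i : Fin (n+1),
          F x * (fderiv ℝ (fun y => fderiv ℝ F y (EuclideanSpace.single i 1)) x
            (EuclideanSpace.single i 1)) * p x
          = p x * (F x * laplacian F x) := by
        have hl : laplacian F x = ∑ i, fderiv ℝ
            (fun y => fderiv ℝ F y (EuclideanSpace.single i 1)) x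
            (EuclideanSpace.single i 1) := rfl
        rw [hl, Finset.mul_sum, Finset.mul_sum]
        refine Finset.sum_congr rfl fun i _ => ?_
        ring
      have e3 : ∑ i : Fin (n+1),
          F x * fderiv ℝ F x (EuclideanSpace.single i 1)
            * fderiv ℝ p x (EuclideanSpace.single i 1)
          = p x * (F x *
            (inner ℝ (gradient F x) (gradient (fun y => Real.log (p y)) x) : ℝ)) := by
        rw [grad_inner, Finset.mul_sum, Finset.mul_sum]
        refine Finset.sum_congr rfl fun i _ => ?_
        rw [log_fderiv hp hppos]
        simp only [ContinuousLinearMap.coe_smul', Pi.smul_apply, smul_eq_mul]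
        have hpx : p x ≠ 0 := (hppos x).ne'
        field_simp
      rw [e1, e2, e3]
    have hdiv_eq : (fun x : EuclideanSpace ℝ (Fin (n+1)) => ∑ i,
        ((fderiv ℝ F x (EuclideanSpace.single i 1)) ^ 2 * p x
          + F x * (fderiv ℝ (fun y => fderiv ℝ F y (EuclideanSpace.single i 1)) x
              (EuclideanSpace.single i 1)) * p x
          + F x * fderiv ℝ F x (EuclideanSpace.single i 1)
              * fderiv ℝ p x (EuclideanSpace.single i 1)))
        = fun x => p x * ‖gradient F x‖ ^ 2 + p x * (F x * laplacian F x) + p x * (F x *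
            (inner ℝ (gradient F x) (gradient (fun y => Real.log (p y)) x) : ℝ)) :=
      funext hpt
    have hdiv_int : Integrable (fun x : EuclideanSpace ℝ (Fin (n+1)) => ∑ i,
        ((fderiv ℝ F x (EuclideanSpace.single i 1)) ^ 2 * p x
          + F x * (fderiv ℝ (fun y => fderiv ℝ F y (EuclideanSpace.single i 1)) x
              (EuclideanSpace.single i 1)) * p x
          + F x * fderiv ℝ F x (EuclideanSpace.single i 1)
              * fderiv ℝ p x (EuclideanSpace.single i 1))) volume := by
      rw [hdiv_eq]
      exact (hTg.add hTl).add hTs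
    have hZ := my_div_zero F p hF hp hdiv_int hq_int
    rw [hdiv_eq] at hZ
    have i12 : Integrable (fun x => p x * ‖gradient F x‖ ^ 2
        + p x * (F x * laplacian F x)) volume := by exact hTg.add hTl
    rw [integral_add i12 hTs, integral_add hTg hTl] at hZ
    have cA : ∫ x, p x * ‖gradient F x‖ ^ 2
        = ∫ x, ‖gradient F x‖ ^ 2 ∂(densMeasure p) := (dens_integral hpc hp0 _).symm
    have cB : ∫ x, p x * (F x * laplacian F x)
        = ∫ x, F x * laplacian F x ∂(densMeasure p) := (dens_integral hpc hp0 _).symm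
    have cC : ∫ x, p x * (F x *
        (inner ℝ (gradient F x) (gradient (fun y => Real.log (p y)) x) : ℝ))
        = ∫ x, F x * (inner ℝ (gradient F x) (gradient (fun y => Real.log (p y)) x) : ℝ)
            ∂(densMeasure p) := (dens_integral hpc hp0 _).symm
    rw [cA, cB, cC] at hZ
    -- Cauchy-Schwarz bounds
    have hBbound : |∫ x, F x * laplacian F x ∂(densMeasure p)|
        ≤ Real.sqrt (∫ x, (laplacian F x) ^ 2 ∂(densMeasure p))
          * Real.sqrt (∫ x, (F x) ^ 2 ∂(densMeasure p)) := by
      have hfg : Integrable (fun x => laplacian F x * F x) (densMeasure p) :=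
        hint_Flap.congr (Filter.Eventually.of_forall fun x => mul_comm _ _)
      have h := my_cs (densMeasure p) (fun x => laplacian F x) F hint_lap2 hint_F2 hfg
      have he : ∫ x, laplacian F x * F x ∂(densMeasure p)
          = ∫ x, F x * laplacian F x ∂(densMeasure p) :=
        integral_congr_ae (Filter.Eventually.of_forall fun x => mul_comm _ _)
      rwa [he] at h
    have hsInt : Integrable
        (fun x => |F x| * ‖gradient (fun y => Real.log (p y)) x‖) (densMeasure p) := by
      have hmeas : AEStronglyMeasurable
          (fun x => |F x| * ‖gradient (fun y => Real.log (p y)) x‖) (densMeasure p) :=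
        (hFc.abs.mul hscont.norm).aestronglyMeasurable
      have hsum : Integrable (fun x => (F x) ^ 2
          + ‖gradient (fun y => Real.log (p y)) x‖ ^ 2) (densMeasure p) := by
        exact hint_F2.add hint_score2
      refine Integrable.mono hsum hmeas ?_
      filter_upwards with x
      rw [Real.norm_eq_abs, Real.norm_eq_abs]
      have h1 : (0:ℝ) ≤ |F x| := abs_nonneg _
      have h2 : (0:ℝ) ≤ ‖gradient (fun y => Real.log (p y)) x‖ := norm_nonneg _
      rw [abs_of_nonneg (mul_nonneg h1 h2), abs_of_nonneg (by positivity :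
        (0:ℝ) ≤ F x ^ 2 + ‖gradient (fun y => Real.log (p y)) x‖ ^ 2)]
      nlinarith [sq_abs (F x), sq_nonneg (|F x| - ‖gradient (fun y => Real.log (p y)) x‖)]
    have hf2' : Integrable (fun x => |F x| ^ 2) (densMeasure p) :=
      hint_F2.congr (Filter.Eventually.of_forall fun x => (sq_abs (F x)).symm)
    have hg2' : Integrable (fun x => ‖gradient (fun y => Real.log (p y)) x‖ ^ 2)
        (densMeasure p) := hint_score2
    have hCS2 := my_cs (densMeasure p) (fun x => |F x|)
      (fun x => ‖gradient (fun y => Real.log (p y)) x‖) hf2' hg2' hsInt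
    have hintabs : ∫ x, |F x| ^ 2 ∂(densMeasure p) = ∫ x, (F x) ^ 2 ∂(densMeasure p) :=
      integral_congr_ae (Filter.Eventually.of_forall fun x => sq_abs (F x))
    rw [hintabs] at hCS2
    have hCbound : |∫ x, F x *
        (inner ℝ (gradient F x) (gradient (fun y => Real.log (p y)) x) : ℝ) ∂(densMeasure p)|
        ≤ M * (Real.sqrt (∫ x, (F x) ^ 2 ∂(densMeasure p))
          * Real.sqrt (∫ x, ‖gradient (fun y => Real.log (p y)) x‖ ^ 2 ∂(densMeasure p))) := by
      have step1 : |∫ x, F x *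
          (inner ℝ (gradient F x) (gradient (fun y => Real.log (p y)) x) : ℝ) ∂(densMeasure p)|
          ≤ ∫ x, |F x *
            (inner ℝ (gradient F x) (gradient (fun y => Real.log (p y)) x) : ℝ)| ∂(densMeasure p) := by
        have hni := norm_integral_le_integral_norm (μ := densMeasure p)
          (f := fun x => F x *
            (inner ℝ (gradient F x) (gradient (fun y => Real.log (p y)) x) : ℝ))
        simp only [Real.norm_eq_abs] at hni
        exact hni
      have step2 : ∫ x, |F x *
          (inner ℝ (gradient F x) (gradient (fun y => Real.log (p y)) x) : ℝ)| ∂(densMeasure p)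
          ≤ ∫ x, M * (|F x| * ‖gradient (fun y => Real.log (p y)) x‖) ∂(densMeasure p) := by
        refine integral_mono hint_Fscore.abs (hsInt.const_mul M) fun x => ?_
        have h1 : |(inner ℝ (gradient F x) (gradient (fun y => Real.log (p y)) x) : ℝ)|
            ≤ ‖gradient F x‖ * ‖gradient (fun y => Real.log (p y)) x‖ :=
          abs_real_inner_le_norm _ _
        have h2 : ‖gradient F x‖ ≤ M := hM x
        have h3 : (0:ℝ) ≤ |F x| := abs_nonneg _
        have h4 : (0:ℝ) ≤ ‖gradient (fun y => Real.log (p y)) x‖ := norm_nonneg _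
        calc |F x * (inner ℝ (gradient F x) (gradient (fun y => Real.log (p y)) x) : ℝ)|
            = |F x| * |(inner ℝ (gradient F x) (gradient (fun y => Real.log (p y)) x) : ℝ)| :=
              abs_mul _ _
        _ ≤ M * (|F x| * ‖gradient (fun y => Real.log (p y)) x‖) := by
              nlinarith [mul_le_mul_of_nonneg_left h1 h3,
                mul_nonneg (mul_nonneg (sub_nonneg.mpr h2) h3) h4]
      have step3 : ∫ x, M * (|F x| * ‖gradient (fun y => Real.log (p y)) x‖) ∂(densMeasure p)
          = M * ∫ x, |F x| * ‖gradient (fun y => Real.log (p y)) x‖ ∂(densMeasure p) :=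
        integral_const_mul _ _
      have step4 : ∫ x, |F x| * ‖gradient (fun y => Real.log (p y)) x‖ ∂(densMeasure p)
          ≤ Real.sqrt (∫ x, (F x) ^ 2 ∂(densMeasure p))
            * Real.sqrt (∫ x, ‖gradient (fun y => Real.log (p y)) x‖ ^ 2 ∂(densMeasure p)) :=
        (le_abs_self _).trans hCS2
      calc |∫ x, F x *
          (inner ℝ (gradient F x) (gradient (fun y => Real.log (p y)) x) : ℝ) ∂(densMeasure p)|
          ≤ ∫ x, M * (|F x| * ‖gradient (fun y => Real.log (p y)) x‖) ∂(densMeasure p) :=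
            step1.trans step2
      _ = M * ∫ x, |F x| * ‖gradient (fun y => Real.log (p y)) x‖ ∂(densMeasure p) := step3
      _ ≤ M * (Real.sqrt (∫ x, (F x) ^ 2 ∂(densMeasure p))
            * Real.sqrt (∫ x, ‖gradient (fun y => Real.log (p y)) x‖ ^ 2 ∂(densMeasure p))) :=
            mul_le_mul_of_nonneg_left step4 hM0
    -- conclusion
    set A := ∫ x, ‖gradient F x‖ ^ 2 ∂(densMeasure p)
    set B := ∫ x, F x * laplacian F x ∂(densMeasure p)
    set C := ∫ x, F x *
      (inner ℝ (gradient F x) (gradient (fun y => Real.log (p y)) x) : ℝ) ∂(densMeasure p)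
    have hABC : A + B + C = 0 := hZ
    have hA : A ≤ |B| + |C| := by
      have h1 : A = -(B + C) := by linarith
      have h2 : -(B + C) ≤ |B + C| := (neg_le_abs _)
      have h3 : |B + C| ≤ |B| + |C| := abs_add_le _ _
      linarith
    calc A ≤ |B| + |C| := hA
    _ ≤ Real.sqrt (∫ x, (laplacian F x) ^ 2 ∂(densMeasure p))
          * Real.sqrt (∫ x, (F x) ^ 2 ∂(densMeasure p))
        + M * (Real.sqrt (∫ x, (F x) ^ 2 ∂(densMeasure p))
          * Real.sqrt (∫ x, ‖gradient (fun y => Real.log (p y)) x‖ ^ 2 ∂(densMeasure p))) :=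
        add_le_add hBbound hCbound
    _ = (Real.sqrt (∫ x, (laplacian F x) ^ 2 ∂(densMeasure p)) +
          M * Real.sqrt (∫ x, ‖gradient (fun y => Real.log (p y)) x‖ ^ 2 ∂(densMeasure p))) *
        Real.sqrt (∫ x, (F x) ^ 2 ∂(densMeasure p)) := by ring
end

section
/- Fix δ > 0 and d ≥ 1. Let f : ℝ^d → ℝ be twice continuously differentiable with sup_x ‖∇²f(x)‖_op ≤ M, where ‖·‖_op is the operator norm of the Hessian. Then for every x ∈ ℝ^d, ‖∇̂f(x) − ∇f(x)‖ ≤ d·δ·M/2. -/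
open MeasureTheory

section Helpers

variable {d : ℕ}

lemma integ_cont (σ : Measure (EuclideanSpace ℝ (Fin d))) [IsProbabilityMeasure σ]
    (hσ : ∀ᵐ u ∂σ, ‖u‖ = 1) {F : Type*} [NormedAddCommGroup F]
    (φ : EuclideanSpace ℝ (Fin d) → F) (hφ : Continuous φ) : Integrable φ σ := by
  obtain ⟨C, hC⟩ := (isCompact_sphere (0 : EuclideanSpace ℝ (Fin d)) 1).exists_bound_of_continuousOn
    hφ.continuousOn
  refine Integrable.mono' (integrable_const C) hφ.aestronglyMeasurable ?_
  filter_upwards [hσ] with u hu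
  exact hC u (by simp [mem_sphere_zero_iff_norm, hu])

lemma taylor2_bound {E : Type*} [NormedAddCommGroup E] [NormedSpace ℝ E]
    (f : E → ℝ) (hf : ContDiff ℝ 2 f) (M : ℝ)
    (hM : ∀ x, ‖fderiv ℝ (fun y => fderiv ℝ f y) x‖ ≤ M) (x y : E) :
    ‖f y - f x - fderiv ℝ f x (y - x)‖ ≤ M / 2 * ‖y - x‖ ^ 2 := by
  have hdf : ContDiff ℝ 1 (fderiv ℝ f) := hf.fderiv_right (by norm_num)
  have hdiff : Differentiable ℝ f := hf.differentiable (by norm_num)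
  have lip : ∀ a b : E, ‖fderiv ℝ f b - fderiv ℝ f a‖ ≤ M * ‖b - a‖ := fun a b =>
    Convex.norm_image_sub_le_of_norm_fderiv_le
      (fun z _ => hdf.differentiable (by norm_num) z)
      (fun z _ => hM z) convex_univ (Set.mem_univ a) (Set.mem_univ b)
  set h := y - x with hh
  set φ' : ℝ → ℝ := fun t => fderiv ℝ f (x + t • h) h with hφ'
  have hline : ∀ t : ℝ, HasDerivAt (fun s : ℝ => x + s • h) h t := by
    intro t
    simpa using ((hasDerivAt_id t).smul_const h).const_add x
  have hder : ∀ t : ℝ, HasDerivAt (fun s => f (x + s • h)) (φ' t) t := by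
    intro t
    exact (hdiff (x + t • h)).hasFDerivAt.comp_hasDerivAt t (hline t)
  have hcont : Continuous φ' := by
    exact (hdf.continuous.comp (by continuity)).clm_apply continuous_const
  have key : f (x + (1:ℝ) • h) - f (x + (0:ℝ) • h) = ∫ t in (0:ℝ)..1, φ' t := by
    rw [intervalIntegral.integral_eq_sub_of_hasDerivAt (fun t _ => hder t)
      (hcont.intervalIntegrable 0 1)]
  have h0 : f y - f x - fderiv ℝ f x (y - x) = ∫ t in (0:ℝ)..1, (φ' t - φ' 0) := by
    rw [intervalIntegral.integral_sub (hcont.intervalIntegrable 0 1)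
      (intervalIntegrable_const), ← key]
    simp [hφ', hh]
  rw [h0]
  have hbound : ∀ t ∈ Set.uIcc (0:ℝ) 1, ‖φ' t - φ' 0‖ ≤ (M * ‖h‖ ^ 2) * t := by
    intro t ht
    rw [Set.uIcc_of_le (by norm_num)] at ht
    have : φ' t - φ' 0 = (fderiv ℝ f (x + t • h) - fderiv ℝ f (x + (0:ℝ) • h)) h := by
      simp [hφ']
    rw [this]
    calc ‖(fderiv ℝ f (x + t • h) - fderiv ℝ f (x + (0:ℝ) • h)) h‖
        ≤ ‖fderiv ℝ f (x + t • h) - fderiv ℝ f (x + (0:ℝ) • h)‖ * ‖h‖ :=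
          ContinuousLinearMap.le_opNorm _ _
      _ ≤ (M * ‖(x + t • h) - (x + (0:ℝ) • h)‖) * ‖h‖ := by
          gcongr; exact lip _ _
      _ = (M * ‖h‖ ^ 2) * t := by
          have : (x + t • h) - (x + (0:ℝ) • h) = t • h := by module
          rw [this, norm_smul, Real.norm_eq_abs, abs_of_nonneg ht.1]
          ring
  calc ‖∫ t in (0:ℝ)..1, (φ' t - φ' 0)‖
      ≤ ∫ t in (0:ℝ)..1, ‖φ' t - φ' 0‖ :=
        intervalIntegral.norm_integral_le_integral_norm (by norm_num)
    _ ≤ ∫ t in (0:ℝ)..1, (M * ‖h‖ ^ 2) * t := by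
        apply intervalIntegral.integral_mono_on (by norm_num)
          ((hcont.sub continuous_const).norm.intervalIntegrable 0 1)
          ((continuous_const.mul continuous_id).intervalIntegrable 0 1)
        intro t ht
        exact hbound t (by rwa [Set.uIcc_of_le (by norm_num)])
    _ = M / 2 * ‖h‖ ^ 2 := by
        rw [intervalIntegral.integral_const_mul, integral_id]
        ring

lemma integral_comp_isom (σ : Measure (EuclideanSpace ℝ (Fin d)))
    (hσ_inv : ∀ L : EuclideanSpace ℝ (Fin d) ≃ₗᵢ[ℝ] EuclideanSpace ℝ (Fin d), σ.map L = σ)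
    {F : Type*} [NormedAddCommGroup F] [NormedSpace ℝ F]
    (φ : EuclideanSpace ℝ (Fin d) → F) (hφ : Continuous φ)
    (L : EuclideanSpace ℝ (Fin d) ≃ₗᵢ[ℝ] EuclideanSpace ℝ (Fin d)) :
    ∫ u, φ (L u) ∂σ = ∫ u, φ u ∂σ := by
  conv_rhs => rw [← hσ_inv L]
  rw [integral_map L.continuous.measurable.aemeasurable hφ.aestronglyMeasurable]

/-- negation at one coordinate -/
noncomputable def negAt (i : Fin d) :
    EuclideanSpace ℝ (Fin d) ≃ₗᵢ[ℝ] EuclideanSpace ℝ (Fin d) :=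
  LinearIsometryEquiv.piLpCongrRight 2
    (fun k => if k = i then LinearIsometryEquiv.neg ℝ else LinearIsometryEquiv.refl ℝ ℝ)

lemma negAt_apply_self (i : Fin d) (u : EuclideanSpace ℝ (Fin d)) : negAt i u i = -u i := by
  simp [negAt, LinearIsometryEquiv.piLpCongrRight_apply]

lemma negAt_apply_ne (i k : Fin d) (h : k ≠ i) (u : EuclideanSpace ℝ (Fin d)) :
    negAt i u k = u k := by
  simp [negAt, LinearIsometryEquiv.piLpCongrRight_apply, h]

/-- swap of coordinates -/
noncomputable def swapC (i j : Fin d) :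
    EuclideanSpace ℝ (Fin d) ≃ₗᵢ[ℝ] EuclideanSpace ℝ (Fin d) :=
  LinearIsometryEquiv.piLpCongrLeft 2 ℝ ℝ (Equiv.swap i j)

lemma swapC_apply (i j k : Fin d) (u : EuclideanSpace ℝ (Fin d)) :
    swapC i j u k = u (Equiv.swap i j k) := by
  simp [swapC, LinearIsometryEquiv.piLpCongrLeft_apply, Equiv.piCongrLeft'_apply,
    Equiv.symm_swap]

variable (σ : Measure (EuclideanSpace ℝ (Fin d))) [IsProbabilityMeasure σ]
  (hσ_sphere : ∀ᵐ u ∂σ, ‖u‖ = 1)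
  (hσ_inv : ∀ L : EuclideanSpace ℝ (Fin d) ≃ₗᵢ[ℝ] EuclideanSpace ℝ (Fin d), σ.map L = σ)

set_option linter.unusedSectionVars false

include hσ_inv in
lemma mean_zero : ∫ u, u ∂σ = (0 : EuclideanSpace ℝ (Fin d)) := by
  have h := integral_comp_isom σ hσ_inv (fun u => u) continuous_id (LinearIsometryEquiv.neg ℝ)
  simp only [LinearIsometryEquiv.coe_neg] at h
  have hneg : -∫ u, u ∂σ = ∫ u, u ∂σ := by rw [← integral_neg]; exact h
  have h2 : (2 : ℝ) • ∫ u, u ∂σ = 0 := by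
    rw [two_smul]; nth_rewrite 1 [← hneg]; exact neg_add_cancel _
  simpa using h2

include hσ_inv in
lemma mom_offdiag (i j : Fin d) (hij : i ≠ j) : ∫ u, u i * u j ∂σ = 0 := by
  have hc : Continuous (fun u : EuclideanSpace ℝ (Fin d) => u i * u j) :=
    ((EuclideanSpace.proj i).continuous).mul ((EuclideanSpace.proj j).continuous)
  have h := integral_comp_isom σ hσ_inv _ hc (negAt i)
  simp only [negAt_apply_self, negAt_apply_ne i j (Ne.symm hij), neg_mul, integral_neg] at h
  linarith [h]

include hσ_inv in
lemma mom_diag_eq (i j : Fin d) : ∫ u, u i * u i ∂σ = ∫ u, u j * u j ∂σ := by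
  have hc : Continuous (fun u : EuclideanSpace ℝ (Fin d) => u i * u i) :=
    ((EuclideanSpace.proj i).continuous).mul ((EuclideanSpace.proj i).continuous)
  have h := integral_comp_isom σ hσ_inv _ hc (swapC i j)
  simp only [swapC_apply] at h
  have hs : ∀ u : EuclideanSpace ℝ (Fin d), u (Equiv.swap i j i) = u j := fun u => by
    rw [Equiv.swap_apply_left]
  simp only [hs] at h
  rw [← h]

include hσ_sphere in
lemma mom_sum : ∑ i : Fin d, ∫ u, u i * u i ∂σ = 1 := by
  have hint : ∀ i ∈ Finset.univ, Integrable (fun u : EuclideanSpace ℝ (Fin d) => u i * u i) σ :=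
    fun i _ => integ_cont σ hσ_sphere (fun u => u i * u i)
      (((EuclideanSpace.proj i).continuous).mul ((EuclideanSpace.proj i).continuous))
  rw [← integral_finset_sum _ hint]
  have : ∫ u, (∑ i : Fin d, u i * u i) ∂σ = ∫ (_ : EuclideanSpace ℝ (Fin d)), (1:ℝ) ∂σ := by
    apply integral_congr_ae
    filter_upwards [hσ_sphere] with u hu
    have hn := EuclideanSpace.norm_eq u
    rw [hu] at hn
    have h2 : (1:ℝ) = ∑ i, u i ^ 2 := by
      have := congrArg (· ^ 2) hn.symm
      simpa [Real.sq_sqrt (Finset.sum_nonneg fun i _ => sq_nonneg (u i))] using this.symm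
    calc ∑ i : Fin d, u i * u i = ∑ i, u i ^ 2 := by simp [sq]
      _ = 1 := h2.symm
  rw [this]
  simp

include hσ_sphere hσ_inv in
lemma mom_diag (hd : 1 ≤ d) (i : Fin d) : ∫ u, u i * u i ∂σ = 1 / d := by
  have hsum := mom_sum σ hσ_sphere
  have heq : ∀ j : Fin d, ∫ u, u j * u j ∂σ = ∫ u, u i * u i ∂σ := fun j =>
    mom_diag_eq σ hσ_inv j i
  rw [Finset.sum_congr rfl (fun j _ => heq j), Finset.sum_const, Finset.card_univ,
    Fintype.card_fin, nsmul_eq_mul] at hsum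
  have hd' : (d : ℝ) ≠ 0 := by positivity
  field_simp
  simp only [sq]
  linarith [hsum]

include hσ_sphere hσ_inv in
lemma mom_vec (hd : 1 ≤ d) (g : EuclideanSpace ℝ (Fin d)) :
    ∫ u, (inner ℝ g u : ℝ) • u ∂σ = (d : ℝ)⁻¹ • g := by
  have hcont : Continuous (fun u : EuclideanSpace ℝ (Fin d) => (inner ℝ g u : ℝ) • u) :=
    (continuous_const.inner continuous_id : Continuous fun u : EuclideanSpace ℝ (Fin d) => inner ℝ g u).smul continuous_id
  have hint := integ_cont σ hσ_sphere _ hcont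
  ext j
  have hproj : (EuclideanSpace.proj j) (∫ u, (inner ℝ g u : ℝ) • u ∂σ)
      = ∫ u, (inner ℝ g u : ℝ) * u j ∂σ := by
    rw [← ContinuousLinearMap.integral_comp_comm _ hint]
    simp [smul_eq_mul]
  have hexp : ∀ u : EuclideanSpace ℝ (Fin d),
      (inner ℝ g u : ℝ) * u j = ∑ i, g i * (u i * u j) := by
    intro u
    rw [PiLp.inner_apply, Finset.sum_mul]
    simp [RCLike.inner_apply, mul_assoc]
    exact Finset.sum_congr rfl fun i _ => by ring
  have h2 : ∫ u, (inner ℝ g u : ℝ) * u j ∂σ = ∑ i, g i * ∫ u, u i * u j ∂σ := by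
    simp_rw [hexp]
    rw [integral_finset_sum _ (fun i _ => (integ_cont σ hσ_sphere (fun u => g i * (u i * u j))
      (continuous_const.mul (((EuclideanSpace.proj i).continuous).mul
        ((EuclideanSpace.proj j).continuous)))))]
    exact Finset.sum_congr rfl fun i _ => integral_const_mul _ _
  have h3 : ∑ i, g i * ∫ u, u i * u j ∂σ = g j * (1 / d) := by
    rw [Finset.sum_eq_single j]
    · rw [mom_diag σ hσ_sphere hσ_inv hd j]
    · intro i _ hij
      rw [mom_offdiag σ hσ_inv i j hij, mul_zero]
    · simp
  show (EuclideanSpace.proj j) (∫ u, (inner ℝ g u : ℝ) • u ∂σ) = _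
  rw [hproj, h2, h3]
  simp [PiLp.smul_apply, smul_eq_mul]
  ring

end Helpers

/-- The spherical-smoothing gradient estimator
`∇̂f(x) := (d/δ)·E_{u∼σ}[ f(x + δu)·u ]` for `f : ℝ^d → ℝ`. -/
noncomputable def sphGradEst {d : ℕ} (σ : Measure (EuclideanSpace ℝ (Fin d))) (δ : ℝ)
    (f : EuclideanSpace ℝ (Fin d) → ℝ) (x : EuclideanSpace ℝ (Fin d)) :
    EuclideanSpace ℝ (Fin d) :=
  ((d : ℝ) / δ) • ∫ u, f (x + δ • u) • u ∂σ

/-- accuracy of the spherical-smoothing gradient estimator.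
Let `σ` be the uniform probability measure on the unit sphere `S^{d−1} ⊂ ℝ^d` (a probability
measure supported on the sphere and invariant under every linear isometry). If `f : ℝ^d → ℝ`
is twice continuously differentiable with `‖∇²f(x)‖_op ≤ M` for all `x`, then for every `x`,
`‖∇̂f(x) − ∇f(x)‖ ≤ d·δ·M/2`. -/
theorem sphGradEst_error_bound {d : ℕ} (hd : 1 ≤ d) (δ : ℝ) (hδ : 0 < δ)
    (σ : Measure (EuclideanSpace ℝ (Fin d))) [IsProbabilityMeasure σ]
    (hσ_sphere : ∀ᵐ u ∂σ, ‖u‖ = 1)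
    (hσ_inv : ∀ L : EuclideanSpace ℝ (Fin d) ≃ₗᵢ[ℝ] EuclideanSpace ℝ (Fin d),
      σ.map L = σ)
    (f : EuclideanSpace ℝ (Fin d) → ℝ) (hf : ContDiff ℝ 2 f)
    (M : ℝ) (hM : ∀ x, ‖fderiv ℝ (fun y => fderiv ℝ f y) x‖ ≤ M)
    (x : EuclideanSpace ℝ (Fin d)) :
    ‖sphGradEst σ δ f x - gradient f x‖ ≤ (d : ℝ) * δ * M / 2 := by
  set g := gradient f x with hg
  have hdual : ∀ v : EuclideanSpace ℝ (Fin d), (inner ℝ g v : ℝ) = fderiv ℝ f x v := fun v =>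
    InnerProductSpace.toDual_symm_apply
  have hd0 : (d : ℝ) ≠ 0 := by positivity
  have hδ0 : δ ≠ 0 := ne_of_gt hδ
  have hM0 : 0 ≤ M := le_trans (norm_nonneg (fderiv ℝ (fun y => fderiv ℝ f y) x)) (hM x)
  set r : EuclideanSpace ℝ (Fin d) → ℝ :=
    fun u => f (x + δ • u) - f x - fderiv ℝ f x (δ • u) with hr
  have hline : Continuous fun u : EuclideanSpace ℝ (Fin d) => x + δ • u :=
    continuous_const.add (continuous_id.const_smul δ)
  have hcf : Continuous fun u : EuclideanSpace ℝ (Fin d) => f (x + δ • u) := by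
    exact hf.continuous.comp hline
  have hcr : Continuous r := by
    apply Continuous.sub (hcf.sub continuous_const)
    exact (fderiv ℝ f x).continuous.comp (continuous_id.const_smul δ)
  have hint1 : Integrable (fun u : EuclideanSpace ℝ (Fin d) => f (x + δ • u) • u) σ :=
    integ_cont σ hσ_sphere _ (hcf.smul continuous_id)
  have hint2 : Integrable (fun u : EuclideanSpace ℝ (Fin d) => (f x) • u) σ :=
    integ_cont σ hσ_sphere _ ((continuous_const : Continuous fun _ : EuclideanSpace ℝ (Fin d) => f x).smul continuous_id)
  have hint3 : Integrable (fun u : EuclideanSpace ℝ (Fin d) => (fderiv ℝ f x (δ • u)) • u) σ :=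
    integ_cont σ hσ_sphere _ (((fderiv ℝ f x).continuous.comp
      (continuous_id.const_smul δ)).smul continuous_id)
  have hintr : Integrable (fun u : EuclideanSpace ℝ (Fin d) => r u • u) σ :=
    integ_cont σ hσ_sphere _ (hcr.smul continuous_id)
  have hI3 : ∫ u, (fderiv ℝ f x (δ • u)) • u ∂σ = (δ / d) • g := by
    have : (fun u : EuclideanSpace ℝ (Fin d) => (fderiv ℝ f x (δ • u)) • u)
        = fun u : EuclideanSpace ℝ (Fin d) => δ • ((inner ℝ g u : ℝ) • u) := by
      funext u
      rw [_root_.map_smul, ← hdual u, smul_eq_mul, mul_smul]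
    rw [this, integral_smul, mom_vec σ hσ_sphere hσ_inv hd g, smul_smul, div_eq_mul_inv]
  have hI2 : ∫ u, (f x) • u ∂σ = (0 : EuclideanSpace ℝ (Fin d)) := by
    rw [integral_smul, mean_zero σ hσ_inv, smul_zero]
  have hsplit : ∫ u, r u • u ∂σ
      = (∫ u, f (x + δ • u) • u ∂σ) - (δ / d) • g := by
    have : (fun u : EuclideanSpace ℝ (Fin d) => r u • u) = fun u : EuclideanSpace ℝ (Fin d) =>
        f (x + δ • u) • u - (f x) • u - (fderiv ℝ f x (δ • u)) • u := by
      funext u; simp [hr, sub_smul]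
    have hint12 : Integrable
        (fun u : EuclideanSpace ℝ (Fin d) => f (x + δ • u) • u - (f x) • u) σ := hint1.sub hint2
    rw [this, integral_sub hint12 hint3, integral_sub hint1 hint2, hI2, hI3, sub_zero]
  have herr : sphGradEst σ δ f x - g = ((d : ℝ) / δ) • ∫ u, r u • u ∂σ := by
    rw [hsplit, smul_sub, sphGradEst, smul_smul,
      show ((d : ℝ) / δ) * (δ / (d : ℝ)) = 1 from by field_simp, one_smul]
  rw [herr]
  have hbd : ‖∫ u, r u • u ∂σ‖ ≤ M / 2 * δ ^ 2 := by
    have hae : ∀ᵐ u ∂σ, ‖r u • u‖ ≤ M / 2 * δ ^ 2 := by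
      filter_upwards [hσ_sphere] with u hu
      have ht := taylor2_bound f hf M hM x (x + δ • u)
      have hxy : (x + δ • u) - x = δ • u := by abel
      rw [hxy] at ht
      have hnu : ‖δ • u‖ = δ := by
        rw [norm_smul, hu, Real.norm_eq_abs, abs_of_pos hδ, mul_one]
      rw [hnu] at ht
      calc ‖r u • u‖ = ‖r u‖ * ‖u‖ := norm_smul _ _
        _ = ‖r u‖ := by rw [hu, mul_one]
        _ ≤ M / 2 * δ ^ 2 := ht
    calc ‖∫ u, r u • u ∂σ‖ ≤ ∫ _u, M / 2 * δ ^ 2 ∂σ :=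
        norm_integral_le_of_norm_le (integrable_const _) hae
      _ = M / 2 * δ ^ 2 := by simp
  calc ‖((d : ℝ) / δ) • ∫ u, r u • u ∂σ‖ = ((d : ℝ) / δ) * ‖∫ u, r u • u ∂σ‖ := by
        rw [norm_smul, Real.norm_eq_abs, abs_of_pos (by positivity)]
    _ ≤ ((d : ℝ) / δ) * (M / 2 * δ ^ 2) := by
        apply mul_le_mul_of_nonneg_left hbd (by positivity)
    _ = (d : ℝ) * δ * M / 2 := by field_simp
end

section
/- Let d ≥ 1, let h : ℝ × ℝ^d → ℝ^d be continuously differentiable in the space variable, g : ℝ → ℝ, and let u, m : ℝ × ℝ^d → ℝ be functions that are continuously differentiable in t and twice continuously differentiable in x, with m(t,x) > 0 for all (t,x). Suppose that at every (t,x): (i) ∂_t u = − ⟨h, ∇_x u⟩ − (g(t)²/2)·Δ_x u (backward Kolmogorov equation), and (ii) ∂_t m = − div_x(m·h) + (g(t)²/2)·Δ_x m (Fokker–Planck equation). Define the reversed drift h̄(t,x) := h(t,x) − g(t)²·∇_x m(t,x)/m(t,x). Then the product u·m satisfies, at every (t,x): ∂_t(u·m) = − div_x( u·m·h̄ ) −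 (g(t)²/2)·Δ_x(u·m). -/
open scoped RealInnerProductSpace

/-- The divergence `div V(x) = Σ_i ∂V_i/∂x_i(x)` of a vector field `V : ℝ^d → ℝ^d`. -/
noncomputable def diverg {d : ℕ}
    (V : EuclideanSpace ℝ (Fin d) → EuclideanSpace ℝ (Fin d))
    (x : EuclideanSpace ℝ (Fin d)) : ℝ :=
  ∑ i, fderiv ℝ V x (EuclideanSpace.single i 1) i

namespace AndersonAux

variable {d : ℕ}

lemma grad_apply (F : EuclideanSpace ℝ (Fin d) → ℝ) (y : EuclideanSpace ℝ (Fin d)) (i : Fin d) :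
    gradient F y i = fderiv ℝ F y (EuclideanSpace.single i 1) := by
  have h1 : ⟪gradient F y, EuclideanSpace.single i (1:ℝ)⟫ = fderiv ℝ F y (EuclideanSpace.single i 1) := by
    rw [gradient]; exact InnerProductSpace.toDual_symm_apply
  rw [EuclideanSpace.inner_single_right] at h1
  simpa using h1

lemma inner_gradient (F : EuclideanSpace ℝ (Fin d) → ℝ) (y v : EuclideanSpace ℝ (Fin d)) :
    ⟪v, gradient F y⟫ = fderiv ℝ F y v := by
  rw [real_inner_comm, gradient]; exact InnerProductSpace.toDual_symm_apply

lemma apply_eq_sum (L : EuclideanSpace ℝ (Fin d) →L[ℝ] ℝ) (v : EuclideanSpace ℝ (Fin d)) :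
    L v = ∑ i, v i * L (EuclideanSpace.single i 1) := by
  have hv : ∑ i, v i • (EuclideanSpace.basisFun (Fin d) ℝ) i = v := by
    simpa [EuclideanSpace.basisFun_repr] using (EuclideanSpace.basisFun (Fin d) ℝ).sum_repr v
  conv_lhs => rw [← hv]
  rw [map_sum]
  simp [EuclideanSpace.basisFun_apply, smul_eq_mul]

lemma fderiv_comp_proj (V : EuclideanSpace ℝ (Fin d) → EuclideanSpace ℝ (Fin d))
    (x : EuclideanSpace ℝ (Fin d)) (hV : DifferentiableAt ℝ V x) (v : EuclideanSpace ℝ (Fin d))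
    (i : Fin d) :
    fderiv ℝ V x v i = fderiv ℝ (fun y => V y i) x v := by
  have h1 := ((EuclideanSpace.proj (𝕜 := ℝ) i).hasFDerivAt.comp x hV.hasFDerivAt).fderiv
  have h2 : (fun y => V y i) = ⇑(EuclideanSpace.proj (𝕜 := ℝ) i) ∘ V := rfl
  rw [h2, h1]; rfl

end AndersonAux

/-- Anderson's time-reversal PDE identity.
Let `u, m : ℝ × ℝ^d → ℝ` be `C¹` in time and `C²` in space with `m > 0`, `h` a `C¹`-in-space
drift and `g` a scalar diffusion coefficient.  If `u` satisfies the backward Kolmogorov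
equation `∂_t u = −⟨h, ∇_x u⟩ − (g²/2)Δ_x u` and `m` satisfies the Fokker–Planck equation
`∂_t m = −div_x(m h) + (g²/2)Δ_x m`, then with the reversed drift
`h̄ = h − g²·∇_x m/m`, the product `u·m` satisfies
`∂_t(u·m) = −div_x(u·m·h̄) − (g²/2)Δ_x(u·m)` at every `(t,x)`. -/
theorem product_solves_reversed_fokker_planck {d : ℕ} (hd : 1 ≤ d)
    (h : ℝ → EuclideanSpace ℝ (Fin d) → EuclideanSpace ℝ (Fin d))
    (g : ℝ → ℝ)
    (u m : ℝ → EuclideanSpace ℝ (Fin d) → ℝ)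
    (hh : ∀ t, ContDiff ℝ 1 (h t))
    (hut : ∀ x, ContDiff ℝ 1 (fun t => u t x))
    (hux : ∀ t, ContDiff ℝ 2 (u t))
    (hmt : ∀ x, ContDiff ℝ 1 (fun t => m t x))
    (hmx : ∀ t, ContDiff ℝ 2 (m t))
    (hmpos : ∀ t x, 0 < m t x)
    (hKBE : ∀ t x, deriv (fun s => u s x) t =
      -⟪h t x, gradient (u t) x⟫ - (g t) ^ 2 / 2 * laplacian (u t) x)
    (hFP : ∀ t x, deriv (fun s => m s x) t =
      -diverg (fun y => m t y • h t y) x + (g t) ^ 2 / 2 * laplacian (m t) x) :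
    ∀ t x, deriv (fun s => u s x * m s x) t =
      -diverg (fun y => (u t y * m t y) •
          (h t y - ((g t) ^ 2 / m t y) • gradient (m t) y)) x -
        (g t) ^ 2 / 2 * laplacian (fun y => u t y * m t y) x := by
  intro t x
  have dU : Differentiable ℝ (u t) := (hux t).differentiable (by norm_num)
  have dM : Differentiable ℝ (m t) := (hmx t).differentiable (by norm_num)
  have dH : Differentiable ℝ (h t) := (hh t).differentiable one_ne_zero
  have dHi : ∀ i : Fin d, Differentiable ℝ (fun y => h t y i) :=
    fun i => (EuclideanSpace.proj (𝕜 := ℝ) i).differentiable.comp dH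
  have hU1 : ContDiff ℝ 1 (fderiv ℝ (u t)) := (hux t).fderiv_right (by norm_num)
  have hM1 : ContDiff ℝ 1 (fderiv ℝ (m t)) := (hmx t).fderiv_right (by norm_num)
  have dDU : ∀ i : Fin d, Differentiable ℝ (fun y => fderiv ℝ (u t) y (EuclideanSpace.single i 1)) := by
    intro i
    have h1 := (ContinuousLinearMap.apply ℝ ℝ
      (EuclideanSpace.single i (1:ℝ))).differentiable.comp (hU1.differentiable one_ne_zero)
    exact h1
  have dDM : ∀ i : Fin d, Differentiable ℝ (fun y => fderiv ℝ (m t) y (EuclideanSpace.single i 1)) := by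
    intro i
    have h1 := (ContinuousLinearMap.apply ℝ ℝ
      (EuclideanSpace.single i (1:ℝ))).differentiable.comp (hM1.differentiable one_ne_zero)
    exact h1
  -- inner product term
  have key_inner : ⟪h t x, gradient (u t) x⟫
      = ∑ i, h t x i * fderiv ℝ (u t) x (EuclideanSpace.single i 1) := by
    rw [AndersonAux.inner_gradient, AndersonAux.apply_eq_sum]
  -- divergence of m • h
  have dW1 : DifferentiableAt ℝ (fun y => m t y • h t y) x := (dM x).smul (dH x)
  have div1 : diverg (fun y => m t y • h t y) x
      = ∑ i, (m t x * fderiv ℝ (fun y => h t y i) x (EuclideanSpace.single i 1)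
          + h t x i * fderiv ℝ (m t) x (EuclideanSpace.single i 1)) := by
    unfold diverg
    refine Finset.sum_congr rfl fun i _ => ?_
    rw [AndersonAux.fderiv_comp_proj _ x dW1]
    have hcomp : (fun y => (m t y • h t y) i) = fun y => m t y * h t y i := by
      funext y; simp [smul_eq_mul]
    rw [hcomp, fderiv_fun_mul (dM x) (dHi i x)]
    simp only [ContinuousLinearMap.add_apply, ContinuousLinearMap.smul_apply, smul_eq_mul]
  -- differentiability of gradient of m
  have dGrad : Differentiable ℝ (fun y => gradient (m t) y) := by
    have heq : (fun y => gradient (m t) y)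
        = fun y => (InnerProductSpace.toDual ℝ (EuclideanSpace ℝ (Fin d))).symm (fderiv ℝ (m t) y) := rfl
    rw [heq]
    exact (InnerProductSpace.toDual ℝ
      (EuclideanSpace ℝ (Fin d))).symm.toContinuousLinearEquiv.differentiable.comp
      (hM1.differentiable one_ne_zero)
  have dQ : DifferentiableAt ℝ (fun y => (g t) ^ 2 / m t y) x := by
    simp only [div_eq_mul_inv]
    exact (differentiableAt_const _).mul ((dM x).inv (hmpos t x).ne')
  have dW2 : DifferentiableAt ℝ (fun y => (u t y * m t y) •
      (h t y - ((g t) ^ 2 / m t y) • gradient (m t) y)) x :=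
    ((dU x).mul (dM x)).smul ((dH x).sub (dQ.smul (dGrad x)))
  have hW2comp : ∀ i : Fin d, (fun y => ((u t y * m t y) •
        (h t y - ((g t) ^ 2 / m t y) • gradient (m t) y)) i)
      = fun y => u t y * m t y * h t y i
          - (g t) ^ 2 * (u t y * fderiv ℝ (m t) y (EuclideanSpace.single i 1)) := by
    intro i; funext y
    have hm0 : m t y ≠ 0 := (hmpos t y).ne'
    simp only [PiLp.smul_apply, PiLp.sub_apply, smul_eq_mul, AndersonAux.grad_apply]
    field_simp
  have div2 : diverg (fun y => (u t y * m t y) •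
        (h t y - ((g t) ^ 2 / m t y) • gradient (m t) y)) x
      = ∑ i, ((u t x * fderiv ℝ (m t) x (EuclideanSpace.single i 1)
            + m t x * fderiv ℝ (u t) x (EuclideanSpace.single i 1)) * h t x i
          + u t x * m t x * fderiv ℝ (fun y => h t y i) x (EuclideanSpace.single i 1)
          - (g t) ^ 2 * (u t x *
              fderiv ℝ (fun y => fderiv ℝ (m t) y (EuclideanSpace.single i 1)) x (EuclideanSpace.single i 1)
            + fderiv ℝ (m t) x (EuclideanSpace.single i 1)
              * fderiv ℝ (u t) x (EuclideanSpace.single i 1))) := by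
    unfold diverg
    refine Finset.sum_congr rfl fun i _ => ?_
    rw [AndersonAux.fderiv_comp_proj _ x dW2, hW2comp i]
    rw [fderiv_fun_sub (((dU x).fun_mul (dM x)).fun_mul (dHi i x)) (((dU x).fun_mul (dDM i x)).const_mul _),
      fderiv_fun_mul ((dU x).fun_mul (dM x)) (dHi i x), fderiv_fun_mul (dU x) (dM x),
      fderiv_const_mul ((dU x).fun_mul (dDM i x)) _, fderiv_fun_mul (dU x) (dDM i x)]
    simp only [ContinuousLinearMap.sub_apply, ContinuousLinearMap.add_apply,
      ContinuousLinearMap.smul_apply, smul_eq_mul]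
    ring
  -- laplacian of product
  have lapProd : laplacian (fun y => u t y * m t y) x
      = ∑ i, (u t x * fderiv ℝ (fun y => fderiv ℝ (m t) y (EuclideanSpace.single i 1)) x
              (EuclideanSpace.single i 1)
          + fderiv ℝ (m t) x (EuclideanSpace.single i 1) * fderiv ℝ (u t) x (EuclideanSpace.single i 1)
          + (m t x * fderiv ℝ (fun y => fderiv ℝ (u t) y (EuclideanSpace.single i 1)) x
              (EuclideanSpace.single i 1)
            + fderiv ℝ (u t) x (EuclideanSpace.single i 1)
              * fderiv ℝ (m t) x (EuclideanSpace.single i 1))) := by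
    unfold laplacian
    refine Finset.sum_congr rfl fun i _ => ?_
    have hin : (fun y => fderiv ℝ (fun z => u t z * m t z) y (EuclideanSpace.single i 1))
        = fun y => u t y * fderiv ℝ (m t) y (EuclideanSpace.single i 1)
            + m t y * fderiv ℝ (u t) y (EuclideanSpace.single i 1) := by
      funext y
      rw [fderiv_fun_mul (dU y) (dM y)]
      simp [smul_eq_mul]
    rw [hin, fderiv_fun_add ((dU x).fun_mul (dDM i x)) ((dM x).fun_mul (dDU i x)),
      fderiv_fun_mul (dU x) (dDM i x), fderiv_fun_mul (dM x) (dDU i x)]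
    simp only [ContinuousLinearMap.add_apply, ContinuousLinearMap.smul_apply, smul_eq_mul]
  -- time derivative of the product
  have hderiv : deriv (fun s => u s x * m s x) t
      = deriv (fun s => u s x) t * m t x + u t x * deriv (fun s => m s x) t :=
    deriv_mul ((hut x).differentiable one_ne_zero t) ((hmt x).differentiable one_ne_zero t)
  have lapU : laplacian (u t) x = ∑ i, fderiv ℝ
      (fun y => fderiv ℝ (u t) y (EuclideanSpace.single i 1)) x (EuclideanSpace.single i 1) := rfl
  have lapM : laplacian (m t) x = ∑ i, fderiv ℝ
      (fun y => fderiv ℝ (m t) y (EuclideanSpace.single i 1)) x (EuclideanSpace.single i 1) := rfl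
  rw [hderiv, hKBE t x, hFP t x, key_inner, div1, div2, lapProd, lapU, lapM]
  simp only [mul_add, add_mul, mul_sub, sub_mul, mul_neg, neg_mul, sub_eq_add_neg, neg_add,
    neg_neg, Finset.mul_sum, Finset.sum_mul, ← Finset.sum_neg_distrib, ← Finset.sum_add_distrib]
  exact Finset.sum_congr rfl fun i _ => by ring
end

section
/- Let d ≥ 1, δ > 0, and let v̂, v* : ℝ^d → [0,1] be twice continuously differentiable functions whose Hessians satisfy sup_x ‖∇²v̂(x)‖_op ≤ M and sup_x ‖∇²v*(x)‖_op ≤ M. Let μ be a probability measure on ℝ^d such that all integrals below are finite. Then ∫ ‖∇v̂(x) − ∇v*(x)‖² dμ(x) ≤ (3/2)·d²·δ²·M² + (3d²/δ²)·sqrt( ∫∫ ( v̂(x + δu) − v*(x + δu) )² dσ(u) dμ(x) ), where σ denotes the uniform probability measure on the unit sphere S^{d−1}. -/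
open MeasureTheory

open MeasureTheory InnerProductSpace RealInnerProductSpace


variable {d : ℕ}

private lemma coord_abs_le_norm (u : EuclideanSpace ℝ (Fin d)) (i : Fin d) : |u i| ≤ ‖u‖ := by
  have h : u i * u i ≤ ‖u‖ ^ 2 := by
    rw [← real_inner_self_eq_norm_sq, PiLp.inner_apply]
    simp only [RCLike.inner_apply, conj_trivial]
    exact Finset.single_le_sum (f := fun j => u j * u j)
      (fun j _ => mul_self_nonneg (u j)) (Finset.mem_univ i)
  nlinarith [abs_nonneg (u i), norm_nonneg u, sq_abs (u i)]

private lemma int_sphere {V : Type*} [NormedAddCommGroup V] [NormedSpace ℝ V]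
    (σ : Measure (EuclideanSpace ℝ (Fin d))) [IsProbabilityMeasure σ]
    {F : EuclideanSpace ℝ (Fin d) → V} (hF : Continuous F) {C : ℝ}
    (hb : ∀ᵐ u ∂σ, ‖F u‖ ≤ C) : Integrable F σ :=
  (integrable_const C).mono' hF.aestronglyMeasurable hb

private lemma subst_isom {V : Type*} [NormedAddCommGroup V] [NormedSpace ℝ V]
    (σ : Measure (EuclideanSpace ℝ (Fin d)))
    (hσ_inv : ∀ L : EuclideanSpace ℝ (Fin d) ≃ₗᵢ[ℝ] EuclideanSpace ℝ (Fin d), σ.map L = σ)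
    (L : EuclideanSpace ℝ (Fin d) ≃ₗᵢ[ℝ] EuclideanSpace ℝ (Fin d))
    {g : EuclideanSpace ℝ (Fin d) → V} (hg : Continuous g) :
    ∫ u, g u ∂σ = ∫ u, g (L u) ∂σ := by
  conv_lhs => rw [← hσ_inv L]
  exact integral_map L.continuous.aemeasurable hg.aestronglyMeasurable

private lemma moment_one (σ : Measure (EuclideanSpace ℝ (Fin d))) [IsProbabilityMeasure σ]
    (hσ_inv : ∀ L : EuclideanSpace ℝ (Fin d) ≃ₗᵢ[ℝ] EuclideanSpace ℝ (Fin d), σ.map L = σ) :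
    ∫ u, u ∂σ = 0 := by
  have h := subst_isom σ hσ_inv (LinearIsometryEquiv.neg ℝ) continuous_id
  have hn : ∀ u : EuclideanSpace ℝ (Fin d), (LinearIsometryEquiv.neg ℝ) u = -u := fun u => rfl
  simp only [id_eq, hn, integral_neg] at h
  have h2 : (2 : ℝ) • ∫ u, u ∂σ = 0 := by
    rw [two_smul]; nth_rewrite 2 [h]; rw [integral_neg]; simp
  simpa using (smul_eq_zero.mp h2).resolve_left (by norm_num)

section moments
variable (σ : Measure (EuclideanSpace ℝ (Fin d))) [IsProbabilityMeasure σ]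
  (hσ_sphere : ∀ᵐ u ∂σ, ‖u‖ = 1)
  (hσ_inv : ∀ L : EuclideanSpace ℝ (Fin d) ≃ₗᵢ[ℝ] EuclideanSpace ℝ (Fin d), σ.map L = σ)

include hσ_inv in
private lemma subst_isom' {V : Type*} [NormedAddCommGroup V] [NormedSpace ℝ V]
    (L : EuclideanSpace ℝ (Fin d) ≃ₗᵢ[ℝ] EuclideanSpace ℝ (Fin d))
    {g : EuclideanSpace ℝ (Fin d) → V} (hg : Continuous g) :
    ∫ u, g u ∂σ = ∫ u, g (L u) ∂σ := by
  conv_lhs => rw [← hσ_inv L]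
  exact integral_map L.continuous.aemeasurable hg.aestronglyMeasurable

private lemma cont_coord (i : Fin d) : Continuous fun u : EuclideanSpace ℝ (Fin d) => u i :=
  (EuclideanSpace.proj (𝕜 := ℝ) i).continuous

include hσ_sphere in
private lemma int_coord_mul (i j : Fin d) :
    Integrable (fun u : EuclideanSpace ℝ (Fin d) => u i * u j) σ := by
  refine (integrable_const (1 : ℝ)).mono'
    ((cont_coord i).mul (cont_coord j)).aestronglyMeasurable ?_
  filter_upwards [hσ_sphere] with u hu
  have h1 := coord_abs_le_norm u i
  have h2 := coord_abs_le_norm u j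
  rw [hu] at h1 h2
  calc ‖u i * u j‖ = |u i| * |u j| := abs_mul _ _
    _ ≤ 1 * 1 := mul_le_mul h1 h2 (abs_nonneg _) zero_le_one
    _ = 1 := one_mul 1

include hσ_sphere hσ_inv in
private lemma moment_mul (i j : Fin d) :
    ∫ u, u i * u j ∂σ = if i = j then (d : ℝ)⁻¹ else 0 := by
  by_cases hij : i = j
  · subst hij
    simp only [if_pos rfl]
    -- all diagonal moments are equal
    have heq : ∀ k l : Fin d, ∫ u, u k * u k ∂σ = ∫ u, u l * u l ∂σ := by
      intro k l
      have h := subst_isom' σ hσ_inv (LinearIsometryEquiv.piLpCongrLeft 2 ℝ ℝ (Equiv.swap k l))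
        ((cont_coord k).mul (cont_coord k))
      simp only [Pi.mul_apply] at h
      rw [h]
      congr 1
      funext u
      have : (LinearIsometryEquiv.piLpCongrLeft 2 ℝ ℝ (Equiv.swap k l)) u k = u l := by
        rw [LinearIsometryEquiv.piLpCongrLeft_apply]
        simp only [Equiv.piCongrLeft'_apply, Equiv.symm_symm]
        rw [Equiv.symm_swap, Equiv.swap_apply_left]
      rw [this]
    -- sum of diagonal moments is 1
    have hsum : ∑ k : Fin d, ∫ u, u k * u k ∂σ = 1 := by
      rw [← integral_finset_sum _ (fun k _ => int_coord_mul σ hσ_sphere k k)]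
      have : ∫ u, (∑ k : Fin d, u k * u k) ∂σ = ∫ (_ : EuclideanSpace ℝ (Fin d)), (1:ℝ) ∂σ := by
        refine integral_congr_ae ?_
        filter_upwards [hσ_sphere] with u hu
        have : (∑ k : Fin d, u k * u k) = ‖u‖ ^ 2 := by
          rw [← real_inner_self_eq_norm_sq, PiLp.inner_apply]
          simp [RCLike.inner_apply, sq]
        rw [this, hu]; norm_num
      rw [this]; simp
    have hd0 : (0:ℕ) < d := i.pos
    have : (d : ℝ) * ∫ u, u i * u i ∂σ = 1 := by
      calc (d : ℝ) * ∫ u, u i * u i ∂σ = ∑ _k : Fin d, ∫ u, u i * u i ∂σ := by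
            rw [Finset.sum_const, Finset.card_univ, Fintype.card_fin, nsmul_eq_mul]
        _ = ∑ k : Fin d, ∫ u, u k * u k ∂σ := Finset.sum_congr rfl (fun k _ => heq i k)
        _ = 1 := hsum
    field_simp at this ⊢
    simp only [if_true, ite_true]
    field_simp
    linarith
  · simp only [if_neg hij]
    -- reflection fixing coordinate j, negating the rest
    set e : EuclideanSpace ℝ (Fin d) := EuclideanSpace.single j (1:ℝ) with he
    set L := Submodule.reflection (Submodule.span ℝ {e}) with hL
    have hLu : ∀ u : EuclideanSpace ℝ (Fin d), L u = (2 * u j) • e - u := by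
      intro u
      rw [hL, Submodule.reflection_apply]
      congr 1
      rw [Submodule.starProjection_singleton]
      have h1 : ⟪e, u⟫ = u j := by
        rw [he, EuclideanSpace.inner_single_left]; simp
      have h2 : ‖e‖ = 1 := by rw [he, EuclideanSpace.norm_single]; simp
      rw [h1, h2]
      rw [two_smul]
      module
    have h := subst_isom' σ hσ_inv L ((cont_coord i).mul (cont_coord j))
    have hcomp : ∀ u : EuclideanSpace ℝ (Fin d), (L u) i * (L u) j = -(u i * u j) := by
      intro u
      have hi : (L u) i = -(u i) := by
        rw [hLu u]
        have : e i = 0 := by rw [he, EuclideanSpace.single_apply, if_neg hij]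
        simp [PiLp.sub_apply, PiLp.smul_apply, this]
      have hj : (L u) j = u j := by
        rw [hLu u]
        have : e j = 1 := by rw [he, EuclideanSpace.single_apply, if_pos rfl]
        simp [PiLp.sub_apply, PiLp.smul_apply, this]; ring
      rw [hi, hj]; ring
    simp only [Pi.mul_apply] at h
    simp_rw [hcomp] at h
    rw [integral_neg] at h
    linarith

end moments



private lemma taylor_bound {d : ℕ} {f : EuclideanSpace ℝ (Fin d) → ℝ} (hf : ContDiff ℝ 2 f)
    {M : ℝ} (hM : ∀ y, ‖fderiv ℝ (fun y => fderiv ℝ f y) y‖ ≤ M)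
    (x h : EuclideanSpace ℝ (Fin d)) :
    |f (x + h) - f x - fderiv ℝ f x h| ≤ M / 2 * ‖h‖ ^ 2 := by
  have hM0 : 0 ≤ M := le_trans (ContinuousLinearMap.opNorm_nonneg _) (hM x)
  have hd1 : ContDiff ℝ 1 (fderiv ℝ f) := hf.fderiv_right (by norm_num)
  have hdiff : Differentiable ℝ f := hf.differentiable (by norm_num)
  have lip : ∀ a b : EuclideanSpace ℝ (Fin d), ‖fderiv ℝ f a - fderiv ℝ f b‖ ≤ M * ‖a - b‖ := by
    intro a b
    exact Convex.norm_image_sub_le_of_norm_fderiv_le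
      (fun y _ => (hd1.differentiable (by norm_num)).differentiableAt)
      (fun y _ => hM y) convex_univ (Set.mem_univ b) (Set.mem_univ a)
  set g' : ℝ → ℝ := fun t => fderiv ℝ f (x + t • h) h - fderiv ℝ f x h with hg'
  have hg : ∀ t ∈ Set.uIcc (0:ℝ) 1,
      HasDerivAt (fun t => f (x + t • h) - t * fderiv ℝ f x h) (g' t) t := by
    intro t _
    have hc : HasDerivAt (fun t : ℝ => x + t • h) h t := by
      simpa using ((hasDerivAt_id t).smul_const h).const_add x
    have h1 : HasDerivAt (fun t => f (x + t • h)) (fderiv ℝ f (x + t • h) h) t :=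
      (hdiff (x + t • h)).hasFDerivAt.comp_hasDerivAt t hc
    simpa [hg', Pi.sub_def] using h1.sub ((hasDerivAt_id t).mul_const (fderiv ℝ f x h))
  have hcont : Continuous g' := by
    have h1 : Continuous fun t : ℝ => fderiv ℝ f (x + t • h) :=
      (hf.continuous_fderiv (by norm_num)).comp (by continuity)
    exact (h1.clm_apply continuous_const).sub continuous_const
  have hii : IntervalIntegrable g' volume 0 1 := hcont.intervalIntegrable 0 1
  have key : ∫ t in (0:ℝ)..1, g' t = f (x + h) - f x - fderiv ℝ f x h := by
    rw [intervalIntegral.integral_eq_sub_of_hasDerivAt hg hii]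
    simp; ring
  rw [← key]
  have hb : ∀ᵐ t ∂(volume.restrict (Set.uIoc (0:ℝ) 1)), ‖g' t‖ ≤ M * ‖h‖ ^ 2 * t := by
    rw [Set.uIoc_of_le zero_le_one]
    filter_upwards [ae_restrict_mem measurableSet_Ioc] with t ht
    have h1 : ‖g' t‖ = |(fderiv ℝ f (x + t • h) - fderiv ℝ f x) h| := by
      simp [hg']
    rw [h1]
    calc |(fderiv ℝ f (x + t • h) - fderiv ℝ f x) h|
        ≤ ‖fderiv ℝ f (x + t • h) - fderiv ℝ f x‖ * ‖h‖ :=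
          (fderiv ℝ f (x + t • h) - fderiv ℝ f x).le_opNorm h
      _ ≤ (M * ‖x + t • h - x‖) * ‖h‖ := by
          gcongr; exact lip _ _
      _ = M * ‖h‖ ^ 2 * t := by
          have : x + t • h - x = t • h := by abel
          rw [this, norm_smul, Real.norm_eq_abs, abs_of_pos ht.1]
          ring
  have hgint : IntervalIntegrable (fun t => M * ‖h‖ ^ 2 * t) volume 0 1 :=
    (continuous_const.mul continuous_id).intervalIntegrable 0 1
  have := intervalIntegral.norm_integral_le_abs_of_norm_le hb hgint
  calc |∫ t in (0:ℝ)..1, g' t| ≤ |∫ t in (0:ℝ)..1, M * ‖h‖ ^ 2 * t| := this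
    _ = M / 2 * ‖h‖ ^ 2 := by
        rw [intervalIntegral.integral_const_mul, integral_id]
        rw [abs_of_nonneg (by positivity)]
        ring



private lemma grad_est {d : ℕ} {δ M : ℝ} (hδ : 0 < δ)
    (σ : Measure (EuclideanSpace ℝ (Fin d))) [IsProbabilityMeasure σ]
    (hσ_sphere : ∀ᵐ u ∂σ, ‖u‖ = 1)
    (hm1 : ∫ u, u ∂σ = 0)
    (hm2 : ∀ w : EuclideanSpace ℝ (Fin d), ∫ u, (⟪w, u⟫ : ℝ) • u ∂σ = (d : ℝ)⁻¹ • w)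
    (hd : 1 ≤ d)
    (f : EuclideanSpace ℝ (Fin d) → ℝ) (hf : ContDiff ℝ 2 f)
    (hr : ∀ y, f y ∈ Set.Icc (0:ℝ) 1)
    (hhess : ∀ y, ‖fderiv ℝ (fun y => fderiv ℝ f y) y‖ ≤ M)
    (taylor : ∀ x h : EuclideanSpace ℝ (Fin d),
      |f (x + h) - f x - fderiv ℝ f x h| ≤ M / 2 * ‖h‖ ^ 2)
    (x : EuclideanSpace ℝ (Fin d)) :
    ‖gradient f x - ((d : ℝ) / δ) • ∫ u, f (x + δ • u) • u ∂σ‖ ≤ (d : ℝ) * δ * M / 2 := by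
  have hM0 : 0 ≤ M := le_trans (ContinuousLinearMap.opNorm_nonneg _) (hhess x)
  have hd0 : (0:ℝ) < d := by exact_mod_cast Nat.lt_of_lt_of_le Nat.zero_lt_one hd
  set g := gradient f x with hgdef
  have hinner : ∀ u : EuclideanSpace ℝ (Fin d), fderiv ℝ f x u = ⟪g, u⟫ := by
    intro u
    rw [hgdef, gradient]
    exact (InnerProductSpace.toDual_symm_apply).symm
  set R : EuclideanSpace ℝ (Fin d) → ℝ :=
    fun u => f (x + δ • u) - f x - fderiv ℝ f x (δ • u) with hR
  have hRbound : ∀ u : EuclideanSpace ℝ (Fin d), |R u| ≤ M / 2 * δ ^ 2 * ‖u‖ ^ 2 := by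
    intro u
    calc |R u| ≤ M / 2 * ‖δ • u‖ ^ 2 := taylor x (δ • u)
      _ = M / 2 * δ ^ 2 * ‖u‖ ^ 2 := by
          rw [norm_smul, Real.norm_eq_abs, abs_of_pos hδ, mul_pow]; ring
  have hfc : Continuous f := hf.continuous
  have hRc : Continuous R := by
    apply Continuous.sub
    · apply Continuous.sub
      · exact hfc.comp (continuous_const.add (continuous_id.const_smul δ))
      · exact continuous_const
    · exact (fderiv ℝ f x).continuous.comp (continuous_id.const_smul δ)
  -- integrabilities
  have hintR : Integrable (fun u => R u • u) σ := by
    refine (integrable_const (M / 2 * δ ^ 2) ).mono'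
      (hRc.smul continuous_id).aestronglyMeasurable ?_
    filter_upwards [hσ_sphere] with u hu
    rw [norm_smul, Real.norm_eq_abs, hu, mul_one]
    simpa [hu] using hRbound u
  have hintu : Integrable (fun u : EuclideanSpace ℝ (Fin d) => u) σ := by
    refine (integrable_const (1:ℝ)).mono' continuous_id.aestronglyMeasurable ?_
    filter_upwards [hσ_sphere] with u hu
    simp [hu]
  have hintg : Integrable (fun u : EuclideanSpace ℝ (Fin d) => (⟪g, u⟫ : ℝ) • u) σ := by
    refine (integrable_const ‖g‖).mono'
      (((innerSL ℝ g).continuous).smul continuous_id).aestronglyMeasurable ?_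
    filter_upwards [hσ_sphere] with u hu
    rw [norm_smul, Real.norm_eq_abs, hu, mul_one]
    calc |(⟪g, u⟫ : ℝ)| ≤ ‖g‖ * ‖u‖ := abs_real_inner_le_norm g u
      _ = ‖g‖ := by rw [hu, mul_one]
  have hint2 : Integrable (fun u : EuclideanSpace ℝ (Fin d) => f x • u) σ := by
    simpa [Pi.smul_def] using hintu.smul (f x)
  have hint3 : Integrable (fun u : EuclideanSpace ℝ (Fin d) => (δ * (⟪g, u⟫ : ℝ)) • u) σ := by
    simpa [Pi.smul_def, smul_smul] using hintg.smul δ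
  have hint23 : Integrable (fun u : EuclideanSpace ℝ (Fin d) =>
      f x • u + (δ * (⟪g, u⟫ : ℝ)) • u) σ := hint2.add hint3
  -- split the integral
  have hsplit : (fun u : EuclideanSpace ℝ (Fin d) => f (x + δ • u) • u)
      = fun u => R u • u + (f x • u + (δ * (⟪g, u⟫ : ℝ)) • u) := by
    funext u
    rw [hR]
    simp only []
    rw [hinner (δ • u)]
    rw [real_inner_smul_right]
    module
  have hintfs : Integrable (fun u : EuclideanSpace ℝ (Fin d) => f (x + δ • u) • u) σ := by
    rw [hsplit]
    exact hintR.add hint23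
  have hI : ∫ u, f (x + δ • u) • u ∂σ
      = (∫ u, R u • u ∂σ) + (δ / d) • g := by
    rw [hsplit]
    rw [integral_add hintR hint23]
    congr 1
    rw [integral_add hint2 hint3]
    have e1 : ∫ u, f x • u ∂σ = 0 := by
      rw [integral_smul, hm1, smul_zero]
    have e2 : ∫ u, (δ * (⟪g, u⟫ : ℝ)) • u ∂σ = (δ / d) • g := by
      have : (fun u : EuclideanSpace ℝ (Fin d) => (δ * (⟪g, u⟫ : ℝ)) • u)
          = fun u => δ • ((⟪g, u⟫ : ℝ) • u) := by
        funext u; rw [smul_smul]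
      rw [this, integral_smul, hm2 g, smul_smul, div_eq_mul_inv]
    rw [e1, e2, zero_add]
  rw [hI, smul_add]
  have e3 : ((d : ℝ) / δ) • ((δ / d) • g) = g := by
    rw [smul_smul]
    have : (d : ℝ) / δ * (δ / d) = 1 := by field_simp
    rw [this, one_smul]
  rw [e3]
  have e4 : g - (((d : ℝ) / δ) • ∫ u, R u • u ∂σ + g)
      = -(((d : ℝ) / δ) • ∫ u, R u • u ∂σ) := by abel
  rw [e4, norm_neg, norm_smul, Real.norm_eq_abs, abs_of_pos (by positivity)]
  have e5 : ‖∫ u, R u • u ∂σ‖ ≤ M / 2 * δ ^ 2 := by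
    calc ‖∫ u, R u • u ∂σ‖ ≤ ∫ u, ‖R u • u‖ ∂σ := norm_integral_le_integral_norm _
      _ ≤ ∫ _u, M / 2 * δ ^ 2 ∂σ := by
          refine integral_mono_ae hintR.norm (integrable_const _) ?_
          filter_upwards [hσ_sphere] with u hu
          rw [norm_smul, Real.norm_eq_abs, hu, mul_one]
          simpa [hu] using hRbound u
      _ = M / 2 * δ ^ 2 := by
          rw [integral_const, probReal_univ, smul_eq_mul, one_mul]
  calc (d : ℝ) / δ * ‖∫ u, R u • u ∂σ‖ ≤ (d : ℝ) / δ * (M / 2 * δ ^ 2) := by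
        gcongr
    _ = (d : ℝ) * δ * M / 2 := by field_simp

private lemma moment_vec {d : ℕ} (σ : Measure (EuclideanSpace ℝ (Fin d))) [IsProbabilityMeasure σ]
    (hmm : ∀ i j : Fin d, ∫ u, u i * u j ∂σ = if i = j then (d : ℝ)⁻¹ else 0)
    (hint : ∀ i j : Fin d, Integrable (fun u : EuclideanSpace ℝ (Fin d) => u i * u j) σ)
    (w : EuclideanSpace ℝ (Fin d))
    (hintw : Integrable (fun u : EuclideanSpace ℝ (Fin d) => (⟪w, u⟫ : ℝ) • u) σ) :
    ∫ u, (⟪w, u⟫ : ℝ) • u ∂σ = (d : ℝ)⁻¹ • w := by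
  have hproj : ∀ j : Fin d, (∫ u, (⟪w, u⟫ : ℝ) • u ∂σ) j = ∫ u, (⟪w, u⟫ : ℝ) * u j ∂σ := by
    intro j
    have := (EuclideanSpace.proj (𝕜 := ℝ) j).integral_comp_comm hintw
    simpa using this.symm
  have hcomp : ∀ j : Fin d, ∫ u, (⟪w, u⟫ : ℝ) * u j ∂σ = (d : ℝ)⁻¹ * w j := by
    intro j
    have hexp : ∀ u : EuclideanSpace ℝ (Fin d),
        (⟪w, u⟫ : ℝ) * u j = ∑ i : Fin d, w i * (u i * u j) := by
      intro u
      rw [PiLp.inner_apply]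
      simp only [RCLike.inner_apply, conj_trivial]
      rw [Finset.sum_mul]
      exact Finset.sum_congr rfl fun i _ => by ring
    simp_rw [hexp]
    rw [integral_finset_sum _ (fun i _ => (hint i j).const_mul (w i))]
    simp_rw [MeasureTheory.integral_const_mul, hmm]
    rw [Finset.sum_eq_single j]
    · simp [mul_comm]
    · intro i _ hij; simp [hij]
    · simp
  refine PiLp.ext (fun j => ?_)
  rw [hproj j, hcomp j]
  simp [PiLp.smul_apply]

private lemma jensen_abs_sq {d : ℕ} (σ : Measure (EuclideanSpace ℝ (Fin d)))
    [IsProbabilityMeasure σ] {φ : EuclideanSpace ℝ (Fin d) → ℝ}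
    (hc : Continuous φ) (hb : ∀ u, |φ u| ≤ 1) :
    (∫ u, |φ u| ∂σ) ^ 2 ≤ ∫ u, (φ u) ^ 2 ∂σ := by
  have hint1 : Integrable (fun u => |φ u|) σ :=
    (integrable_const (1:ℝ)).mono' hc.abs.aestronglyMeasurable
      (ae_of_all _ fun u => by simpa [abs_abs] using hb u)
  have hint2 : Integrable (fun u => (φ u) ^ 2) σ :=
    (integrable_const (1:ℝ)).mono' (hc.pow 2).aestronglyMeasurable
      (ae_of_all _ fun u => by
        rw [Real.norm_eq_abs, abs_pow]
        nlinarith [hb u, abs_nonneg (φ u)])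
  set A := ∫ u, |φ u| ∂σ with hA
  have h0 : (0:ℝ) ≤ ∫ u, (|φ u| - A) ^ 2 ∂σ := integral_nonneg fun u => sq_nonneg _
  have hexp : ∫ u, (|φ u| - A) ^ 2 ∂σ = (∫ u, (φ u) ^ 2 ∂σ) - A ^ 2 := by
    have he : ∀ u, (|φ u| - A) ^ 2 = ((φ u) ^ 2 - 2 * A * |φ u|) + A ^ 2 := fun u => by
      rw [← sq_abs (φ u)]; ring
    simp_rw [he]
    have hint3 : Integrable (fun u => φ u ^ 2 - 2 * A * |φ u|) σ :=
      hint2.sub (hint1.const_mul (2 * A))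
    rw [integral_add hint3 (integrable_const _),
      integral_sub hint2 (hint1.const_mul (2 * A)), MeasureTheory.integral_const_mul,
      integral_const]
    simp only [measure_univ, probReal_univ, ENNReal.toReal_one, smul_eq_mul, one_mul]
    rw [← hA]; ring
  linarith [hexp ▸ h0]

private lemma sq_tri {N a c T : ℝ} (hN : 0 ≤ N) (ha : 0 ≤ a) (hc : 0 ≤ c)
    (h : N ≤ a + c + a) (hT : c ^ 2 ≤ T) : N ^ 2 ≤ 6 * a ^ 2 + 3 * T := by
  nlinarith [sq_nonneg (a - c)]


set_option maxHeartbeats 1000000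

/-- expected squared gradient-difference bound via spherical smoothing.
Let `σ` be the uniform probability measure on the unit sphere `S^{d−1} ⊂ ℝ^d` (a probability
measure supported on the sphere and invariant under every linear isometry), `μ` a probability
measure on `ℝ^d`, and `v̂, v* : ℝ^d → [0,1]` twice continuously differentiable with Hessian
operator norms bounded by `M`.  Assuming the integrals involved are finite,
`∫ ‖∇v̂ − ∇v*‖² dμ ≤ (3/2)d²δ²M² + (3d²/δ²)·√(∫∫ (v̂(x+δu) − v*(x+δu))² dσ(u) dμ(x))`. -/
theorem gradient_diff_sq_integral_bound {d : ℕ} (hd : 1 ≤ d)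
    (δ : ℝ) (hδ : 0 < δ) (M : ℝ) (hM : 0 ≤ M)
    (σ : Measure (EuclideanSpace ℝ (Fin d))) [IsProbabilityMeasure σ]
    (hσ_sphere : ∀ᵐ u ∂σ, ‖u‖ = 1)
    (hσ_inv : ∀ L : EuclideanSpace ℝ (Fin d) ≃ₗᵢ[ℝ] EuclideanSpace ℝ (Fin d),
      σ.map L = σ)
    (μ : Measure (EuclideanSpace ℝ (Fin d))) [IsProbabilityMeasure μ]
    (vhat vstar : EuclideanSpace ℝ (Fin d) → ℝ)
    (hvhat : ContDiff ℝ 2 vhat) (hvstar : ContDiff ℝ 2 vstar)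
    (hvhat_range : ∀ x, vhat x ∈ Set.Icc (0 : ℝ) 1)
    (hvstar_range : ∀ x, vstar x ∈ Set.Icc (0 : ℝ) 1)
    (hvhat_hess : ∀ x, ‖fderiv ℝ (fun y => fderiv ℝ vhat y) x‖ ≤ M)
    (hvstar_hess : ∀ x, ‖fderiv ℝ (fun y => fderiv ℝ vstar y) x‖ ≤ M)
    (hint_grad : Integrable (fun x => ‖gradient vhat x - gradient vstar x‖ ^ 2) μ)
    (hint_sm : Integrable
      (fun x => ∫ u, (vhat (x + δ • u) - vstar (x + δ • u)) ^ 2 ∂σ) μ) :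
    ∫ x, ‖gradient vhat x - gradient vstar x‖ ^ 2 ∂μ ≤
      3 / 2 * (d : ℝ) ^ 2 * δ ^ 2 * M ^ 2 +
        3 * (d : ℝ) ^ 2 / δ ^ 2 *
          Real.sqrt (∫ x, ∫ u, (vhat (x + δ • u) - vstar (x + δ • u)) ^ 2 ∂σ ∂μ) := by
  have hd0 : (0:ℝ) < d := by exact_mod_cast Nat.lt_of_lt_of_le Nat.zero_lt_one hd
  -- moment identities
  have hmm : ∀ i j : Fin d, ∫ u, u i * u j ∂σ = if i = j then (d:ℝ)⁻¹ else 0 :=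
    moment_mul σ hσ_sphere hσ_inv
  have hm1 : ∫ u, u ∂σ = 0 := moment_one σ hσ_inv
  have hintw : ∀ w : EuclideanSpace ℝ (Fin d),
      Integrable (fun u : EuclideanSpace ℝ (Fin d) => (⟪w, u⟫ : ℝ) • u) σ := by
    intro w
    refine (integrable_const ‖w‖).mono'
      (((innerSL ℝ w).continuous).smul continuous_id).aestronglyMeasurable ?_
    filter_upwards [hσ_sphere] with u hu
    rw [norm_smul, Real.norm_eq_abs, hu, mul_one]
    calc |(⟪w, u⟫ : ℝ)| ≤ ‖w‖ * ‖u‖ := abs_real_inner_le_norm w u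
      _ = ‖w‖ := by rw [hu, mul_one]
  have hm2 : ∀ w : EuclideanSpace ℝ (Fin d),
      ∫ u, (⟪w, u⟫ : ℝ) • u ∂σ = (d : ℝ)⁻¹ • w := fun w =>
    moment_vec σ hmm (fun i j => int_coord_mul σ hσ_sphere i j) w (hintw w)
  -- gradient estimates
  have hestv : ∀ x, ‖gradient vhat x - ((d:ℝ)/δ) • ∫ u, vhat (x + δ • u) • u ∂σ‖
      ≤ (d:ℝ) * δ * M / 2 := fun x =>
    grad_est hδ σ hσ_sphere hm1 hm2 hd vhat hvhat hvhat_range hvhat_hess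
      (fun x h => taylor_bound hvhat hvhat_hess x h) x
  have hests : ∀ x, ‖gradient vstar x - ((d:ℝ)/δ) • ∫ u, vstar (x + δ • u) • u ∂σ‖
      ≤ (d:ℝ) * δ * M / 2 := fun x =>
    grad_est hδ σ hσ_sphere hm1 hm2 hd vstar hvstar hvstar_range hvstar_hess
      (fun x h => taylor_bound hvstar hvstar_hess x h) x
  -- pointwise bound
  have key : ∀ x, ‖gradient vhat x - gradient vstar x‖ ^ 2 ≤
      3 / 2 * (d:ℝ) ^ 2 * δ ^ 2 * M ^ 2 +
        3 * (d:ℝ) ^ 2 / δ ^ 2 * ∫ u, (vhat (x + δ • u) - vstar (x + δ • u)) ^ 2 ∂σ := by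
    intro x
    have hcurve : Continuous fun u : EuclideanSpace ℝ (Fin d) => x + δ • u :=
      continuous_const.add (continuous_id.const_smul δ)
    set φ : EuclideanSpace ℝ (Fin d) → ℝ :=
      fun u => vhat (x + δ • u) - vstar (x + δ • u) with hφ
    have hφc : Continuous φ :=
      (hvhat.continuous.comp hcurve).sub (hvstar.continuous.comp hcurve)
    have hφb : ∀ u, |φ u| ≤ 1 := by
      intro u
      have h1 := hvhat_range (x + δ • u)
      have h2 := hvstar_range (x + δ • u)
      rw [hφ, abs_le]
      exact ⟨by simp only []; linarith [h1.1, h2.2], by simp only []; linarith [h1.2, h2.1]⟩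
    have hintv : Integrable (fun u => vhat (x + δ • u) • u) σ := by
      refine (integrable_const (1:ℝ)).mono'
        ((hvhat.continuous.comp hcurve).smul continuous_id).aestronglyMeasurable ?_
      filter_upwards [hσ_sphere] with u hu
      rw [norm_smul, Real.norm_eq_abs, hu, mul_one]
      have := hvhat_range (x + δ • u)
      rw [abs_of_nonneg this.1]; exact this.2
    have hints : Integrable (fun u => vstar (x + δ • u) • u) σ := by
      refine (integrable_const (1:ℝ)).mono'
        ((hvstar.continuous.comp hcurve).smul continuous_id).aestronglyMeasurable ?_
      filter_upwards [hσ_sphere] with u hu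
      rw [norm_smul, Real.norm_eq_abs, hu, mul_one]
      have := hvstar_range (x + δ • u)
      rw [abs_of_nonneg this.1]; exact this.2
    have hdiffint : Integrable (fun u => φ u • u) σ := by
      have := hintv.sub hints
      refine this.congr ?_  -- fix shape
      filter_upwards with u
      rw [hφ]; simp [sub_smul]
    have hintabs : Integrable (fun u => |φ u|) σ :=
      (integrable_const (1:ℝ)).mono' hφc.abs.aestronglyMeasurable
        (ae_of_all _ fun u => by simpa [abs_abs] using hφb u)
    have hGdiff : ((d:ℝ)/δ) • (∫ u, vhat (x + δ • u) • u ∂σ)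
        - ((d:ℝ)/δ) • (∫ u, vstar (x + δ • u) • u ∂σ)
        = ((d:ℝ)/δ) • ∫ u, φ u • u ∂σ := by
      rw [← smul_sub, ← integral_sub hintv hints]
      congr 1
      refine integral_congr_ae (ae_of_all _ fun u => ?_)
      rw [hφ]; simp [sub_smul]
    have hGle : ‖((d:ℝ)/δ) • ∫ u, φ u • u ∂σ‖ ≤ ((d:ℝ)/δ) * ∫ u, |φ u| ∂σ := by
      rw [norm_smul, Real.norm_eq_abs, abs_of_pos (by positivity)]
      refine mul_le_mul_of_nonneg_left ?_ (by positivity)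
      calc ‖∫ u, φ u • u ∂σ‖ ≤ ∫ u, ‖φ u • u‖ ∂σ := norm_integral_le_integral_norm _
        _ ≤ ∫ u, |φ u| ∂σ := by
            refine integral_mono_ae hdiffint.norm hintabs ?_
            filter_upwards [hσ_sphere] with u hu
            rw [norm_smul, Real.norm_eq_abs, hu, mul_one]
    have htri : ‖gradient vhat x - gradient vstar x‖ ≤
        (d:ℝ) * δ * M / 2 + ((d:ℝ)/δ) * (∫ u, |φ u| ∂σ) + (d:ℝ) * δ * M / 2 := by
      set Gv := ((d:ℝ)/δ) • (∫ u, vhat (x + δ • u) • u ∂σ) with hGv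
      set Gs := ((d:ℝ)/δ) • (∫ u, vstar (x + δ • u) • u ∂σ) with hGs
      have e : gradient vhat x - gradient vstar x
          = (gradient vhat x - Gv) + (Gv - Gs) + (Gs - gradient vstar x) := by abel
      rw [e]
      refine le_trans (norm_add₃_le) ?_
      refine add_le_add (add_le_add (hestv x) ?_) ?_
      · rw [hGv, hGs, hGdiff]; exact hGle
      · rw [norm_sub_rev]; exact hests x
    have hjen : (∫ u, |φ u| ∂σ) ^ 2 ≤ ∫ u, (φ u) ^ 2 ∂σ := jensen_abs_sq σ hφc hφb
    have hA0 : 0 ≤ ∫ u, |φ u| ∂σ := integral_nonneg fun u => abs_nonneg _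
    have hc2 : (((d:ℝ)/δ) * ∫ u, |φ u| ∂σ) ^ 2 ≤ ((d:ℝ)^2/δ^2) * ∫ u, (φ u) ^ 2 ∂σ := by
      rw [mul_pow, div_pow]
      exact mul_le_mul_of_nonneg_left hjen (by positivity)
    have hfin := sq_tri (norm_nonneg _) (by positivity) (by positivity) htri hc2
    calc ‖gradient vhat x - gradient vstar x‖ ^ 2
        ≤ 6 * ((d:ℝ) * δ * M / 2) ^ 2 + 3 * (((d:ℝ)^2/δ^2) * ∫ u, (φ u) ^ 2 ∂σ) := hfin
      _ = 3 / 2 * (d:ℝ) ^ 2 * δ ^ 2 * M ^ 2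
          + 3 * (d:ℝ) ^ 2 / δ ^ 2 * ∫ u, (φ u) ^ 2 ∂σ := by ring
  -- integrate over μ
  set C1 : ℝ := 3 / 2 * (d:ℝ) ^ 2 * δ ^ 2 * M ^ 2 with hC1
  set C2 : ℝ := 3 * (d:ℝ) ^ 2 / δ ^ 2 with hC2
  set S : EuclideanSpace ℝ (Fin d) → ℝ :=
    fun x => ∫ u, (vhat (x + δ • u) - vstar (x + δ • u)) ^ 2 ∂σ with hS
  have hC2pos : 0 ≤ C2 := by rw [hC2]; positivity
  have hmono : ∫ x, ‖gradient vhat x - gradient vstar x‖ ^ 2 ∂μ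
      ≤ ∫ x, (C1 + C2 * S x) ∂μ :=
    integral_mono hint_grad ((integrable_const C1).add (hint_sm.const_mul C2)) key
  have heval : ∫ x, (C1 + C2 * S x) ∂μ = C1 + C2 * ∫ x, S x ∂μ := by
    rw [integral_add (integrable_const _) (hint_sm.const_mul C2), integral_const]
    simp only [measure_univ, probReal_univ, ENNReal.toReal_one, smul_eq_mul, one_mul]
    congr 1
    exact MeasureTheory.integral_const_mul C2 S
  set I : ℝ := ∫ x, S x ∂μ with hI
  have hI0 : 0 ≤ I := integral_nonneg fun x => integral_nonneg fun u => sq_nonneg _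
  have hS1 : ∀ x, S x ≤ 1 := by
    intro x
    rw [hS]
    have hcurve : Continuous fun u : EuclideanSpace ℝ (Fin d) => x + δ • u :=
      continuous_const.add (continuous_id.const_smul δ)
    have hib : Integrable (fun u => (vhat (x + δ • u) - vstar (x + δ • u)) ^ 2) σ := by
      refine (integrable_const (1:ℝ)).mono'
        (((hvhat.continuous.comp hcurve).sub (hvstar.continuous.comp hcurve)).pow 2).aestronglyMeasurable
        (ae_of_all _ fun u => ?_)
      have h1 := hvhat_range (x + δ • u)
      have h2 := hvstar_range (x + δ • u)
      rw [Real.norm_eq_abs, abs_of_nonneg (sq_nonneg _)]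
      nlinarith [h1.1, h1.2, h2.1, h2.2]
    calc ∫ u, (vhat (x + δ • u) - vstar (x + δ • u)) ^ 2 ∂σ
        ≤ ∫ (_ : EuclideanSpace ℝ (Fin d)), (1:ℝ) ∂σ := by
          refine integral_mono hib (integrable_const 1) fun u => ?_
          have h1 := hvhat_range (x + δ • u)
          have h2 := hvstar_range (x + δ • u)
          nlinarith [h1.1, h1.2, h2.1, h2.2]
      _ = 1 := by simp
  have hI1 : I ≤ 1 := by
    calc I ≤ ∫ (_ : EuclideanSpace ℝ (Fin d)), (1:ℝ) ∂μ :=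
          integral_mono hint_sm (integrable_const 1) hS1
      _ = 1 := by simp
  have hIsq : I ≤ Real.sqrt I := by
    nth_rewrite 1 [← Real.sqrt_sq hI0]
    exact Real.sqrt_le_sqrt (by nlinarith)
  calc ∫ x, ‖gradient vhat x - gradient vstar x‖ ^ 2 ∂μ
      ≤ C1 + C2 * I := by rw [← heval]; exact hmono
    _ ≤ C1 + C2 * Real.sqrt I := by
        exact add_le_add_right (mul_le_mul_of_nonneg_left hIsq hC2pos) C1
end
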